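/- arXiv:1312.5698 — 5 statements merged into one kernel-verified Lean document; each statement's English description precedes it below -/
import Mathlib

section
/- The star arboricity of the hypercube Q_3 equals 3. -/
/-- The `n`-dimensional hypercube graph on binary vectors of length `n`:
two vertices are adjacent iff they differ in exactly one coordinate. -/
def cubeGraph (n : ℕ) : SimpleGraph (Fin n → Bool) where
  Adj u v := (Finset.univ.filter fun i => u i ≠ v i).card = 1
  symm := by
    constructor
    intro u v h
    have : (Finset.univ.filter fun i => v i ≠ u i)
        = (Finset.univ.filter fun i => u i ≠ v i) := by
      apply Finset.filter_congr
      intro i _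
      exact ⟨Ne.symm, Ne.symm⟩
    simpa [this] using h
  loopless := by constructor; intro u h; simp at h

/-- A galaxy (star forest): no triangles and no path with three edges,
equivalently every connected component is a star. -/
def IsGalaxy {V : Type*} (F : SimpleGraph V) : Prop :=
  (∀ a b c, F.Adj a b → F.Adj b c → ¬ F.Adj c a) ∧
  (∀ a b c d, F.Adj a b → F.Adj b c → F.Adj c d → a = c ∨ b = d)

/-- The star arboricity of `G`: the least `n` such that the edges of `G`
can be partitioned into `n` galaxies. -/
noncomputable def starArboricity {V : Type*} (G : SimpleGraph V) : ℕ :=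
  sInf {n | ∃ F : Fin n → SimpleGraph V,
    (∀ i, F i ≤ G) ∧ (∀ i, IsGalaxy (F i)) ∧
    (∀ u v, G.Adj u v → ∃! i, (F i).Adj u v)}

/-- The perfect matching of `Q_3` in direction `i`. -/
def dimGraph (i : Fin 3) : SimpleGraph (Fin 3 → Bool) where
  Adj u v := u ≠ v ∧ ∀ j, j ≠ i → u j = v j
  symm := by
    constructor
    rintro u v ⟨h1, h2⟩
    exact ⟨h1.symm, fun j hj => (h2 j hj).symm⟩
  loopless := by constructor; rintro u ⟨h, _⟩; exact h rfl

instance (i : Fin 3) : DecidableRel (dimGraph i).Adj := fun u v =>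
  inferInstanceAs (Decidable (_ ∧ _))

instance : DecidableRel (cubeGraph 3).Adj := fun u v =>
  inferInstanceAs (Decidable (_ = 1))

lemma dimGraph_le (i : Fin 3) : dimGraph i ≤ cubeGraph 3 := by
  intro u v huv
  revert huv
  revert i u v
  decide

lemma dimGraph_galaxy (i : Fin 3) : IsGalaxy (dimGraph i) := by
  constructor
  · revert i; decide
  · revert i; decide

lemma dimGraph_unique : ∀ u v, (cubeGraph 3).Adj u v →
    ∃! i, (dimGraph i).Adj u v := by
  unfold ExistsUnique
  decide

lemma galaxy_leaf {V : Type*} [Fintype V] (F : SimpleGraph V) [DecidableRel F.Adj]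
    (hF : IsGalaxy F) {u v : V} (h : F.Adj u v) :
    F.degree u = 1 ∨ F.degree v = 1 := by
  by_contra hc
  push_neg at hc
  obtain ⟨hu, hv⟩ := hc
  have hu1 : 1 < F.degree u := by
    have : 0 < F.degree u := (F.degree_pos_iff_exists_adj u).2 ⟨v, h⟩
    omega
  have hv1 : 1 < F.degree v := by
    have : 0 < F.degree v := (F.degree_pos_iff_exists_adj v).2 ⟨u, h.symm⟩
    omega
  obtain ⟨a, ha, hav⟩ := Finset.exists_mem_ne hu1 v
  obtain ⟨b, hb, hbu⟩ := Finset.exists_mem_ne hv1 u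
  rw [SimpleGraph.mem_neighborFinset] at ha hb
  rcases hF.2 a u v b ha.symm h hb with h1 | h1
  · exact hav h1
  · exact hbu h1.symm

lemma galaxy_edges_le_leaves {V : Type*} [Fintype V] [DecidableEq V] [Nonempty V]
    (F : SimpleGraph V) [DecidableRel F.Adj] (hF : IsGalaxy F) :
    F.edgeFinset.card ≤ (Finset.univ.filter fun v => F.degree v = 1).card := by
  have hspec : ∀ e ∈ F.edgeFinset, ∃ w, w ∈ e ∧ F.degree w = 1 := by
    intro e
    induction e using Sym2.ind with
    | _ u v =>
      intro he
      rw [SimpleGraph.mem_edgeFinset, SimpleGraph.mem_edgeSet] at he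
      rcases galaxy_leaf F hF he with h1 | h1
      · exact ⟨u, Sym2.mem_mk_left u v, h1⟩
      · exact ⟨v, Sym2.mem_mk_right u v, h1⟩
  choose! f hf1 hf2 using hspec
  apply Finset.card_le_card_of_injOn f
  · intro e he
    simp only [Finset.mem_coe, Finset.mem_filter, Finset.mem_univ, true_and]
    exact hf2 e he
  · intro e1 h1 e2 h2 heq
    simp only [Finset.mem_coe] at h1 h2
    have he1 : e1 ∈ F.incidenceFinset (f e1) := by
      rw [SimpleGraph.mem_incidenceFinset]
      exact ⟨(SimpleGraph.mem_edgeFinset).1 h1, hf1 e1 h1⟩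
    have he2 : e2 ∈ F.incidenceFinset (f e1) := by
      rw [SimpleGraph.mem_incidenceFinset]
      exact ⟨(SimpleGraph.mem_edgeFinset).1 h2, heq ▸ hf1 e2 h2⟩
    have hcard : (F.incidenceFinset (f e1)).card = 1 := by
      rw [SimpleGraph.card_incidenceFinset_eq_degree]
      exact hf2 e1 h1
    exact Finset.card_le_one.1 hcard.le e1 he1 e2 he2

lemma sum_ite_of_existsUnique {m : ℕ} (p : Fin m → Prop) [DecidablePred p]
    (h : ∃! i, p i) : (∑ i, if p i then 1 else 0) = 1 := by
  obtain ⟨i, hi, hu⟩ := h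
  have hfil : (Finset.univ.filter p) = {i} := by
    ext j
    simp only [Finset.mem_filter, Finset.mem_univ, true_and, Finset.mem_singleton]
    exact ⟨fun hj => hu j hj, fun hj => hj ▸ hi⟩
  rw [← Finset.card_filter, hfil, Finset.card_singleton]

lemma cube_deg : ∀ v, (cubeGraph 3).degree v = 3 := by decide

/-- The star arboricity of the hypercube $Q_3$ equals 3. -/
theorem starArboricity_cube_three : starArboricity (cubeGraph 3) = 3 := by
  classical
  have hmem : 3 ∈ {n | ∃ F : Fin n → SimpleGraph (Fin 3 → Bool),
      (∀ i, F i ≤ cubeGraph 3) ∧ (∀ i, IsGalaxy (F i)) ∧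
      (∀ u v, (cubeGraph 3).Adj u v → ∃! i, (F i).Adj u v)} :=
    ⟨dimGraph, dimGraph_le, dimGraph_galaxy, dimGraph_unique⟩
  refine le_antisymm (Nat.sInf_le hmem) (le_csInf ⟨3, hmem⟩ ?_)
  rintro m ⟨F, hle, hgal, huniq⟩
  by_contra hm3
  push_neg at hm3
  have hm : m ≤ 2 := by omega
  -- pointwise degree sum
  have hdegsum : ∀ v, (∑ i, (F i).degree v) = 3 := by
    intro v
    have hsub : ∀ i, (F i).neighborFinset v ⊆ (cubeGraph 3).neighborFinset v := by
      intro i u hu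
      rw [SimpleGraph.mem_neighborFinset] at hu ⊢
      exact hle i hu
    have hstep : ∀ i, (F i).degree v =
        ∑ u ∈ (cubeGraph 3).neighborFinset v, if (F i).Adj v u then 1 else 0 := by
      intro i
      rw [← Finset.card_filter]
      have heq : (Finset.filter (fun u => (F i).Adj v u) ((cubeGraph 3).neighborFinset v))
          = (F i).neighborFinset v := by
        ext u
        simp only [Finset.mem_filter, SimpleGraph.mem_neighborFinset]
        exact ⟨fun h => h.2, fun h => ⟨hle i h, h⟩⟩
      rw [heq]
      rfl
    calc (∑ i, (F i).degree v)
        = ∑ i, ∑ u ∈ (cubeGraph 3).neighborFinset v,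
            if (F i).Adj v u then 1 else 0 := by
          exact Finset.sum_congr rfl fun i _ => hstep i
      _ = ∑ u ∈ (cubeGraph 3).neighborFinset v,
            ∑ i, if (F i).Adj v u then 1 else 0 := Finset.sum_comm
      _ = ∑ u ∈ (cubeGraph 3).neighborFinset v, 1 := by
          apply Finset.sum_congr rfl
          intro u hu
          rw [SimpleGraph.mem_neighborFinset] at hu
          exact sum_ite_of_existsUnique _ (huniq v u hu)
      _ = 3 := by rw [Finset.sum_const, smul_eq_mul, mul_one]; exact cube_deg v
  -- each vertex has degree 1 in at most one galaxy
  have hcard1 : ∀ v, (Finset.univ.filter fun i => (F i).degree v = 1).card ≤ 1 := by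
    intro v
    rw [Finset.card_le_one]
    intro i hi j hj
    by_contra hne
    have hij : ({i, j} : Finset (Fin m)) = Finset.univ := by
      apply Finset.eq_of_subset_of_card_le (Finset.subset_univ _)
      rw [Finset.card_pair hne]
      simpa using hm
    have h3 : (3 : ℕ) = 2 := by
      rw [← hdegsum v, ← hij, Finset.sum_pair hne,
        (Finset.mem_filter.1 hi).2, (Finset.mem_filter.1 hj).2]
    exact absurd h3 (by norm_num)
  -- total edge count
  have hedges : (∑ i, 2 * (F i).edgeFinset.card) = 24 := by
    calc (∑ i, 2 * (F i).edgeFinset.card)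
        = ∑ i, ∑ v, (F i).degree v := by
          refine Finset.sum_congr rfl fun i _ => ?_
          rw [SimpleGraph.sum_degrees_eq_twice_card_edges]
      _ = ∑ v : Fin 3 → Bool, ∑ i, (F i).degree v := Finset.sum_comm
      _ = ∑ v : Fin 3 → Bool, 3 := Finset.sum_congr rfl fun v _ => hdegsum v
      _ = 24 := by simp [Finset.card_univ]
  have hbound : (∑ i, 2 * (F i).edgeFinset.card) ≤ 16 := by
    calc (∑ i, 2 * (F i).edgeFinset.card)
        ≤ ∑ i, 2 * (Finset.univ.filter fun v => (F i).degree v = 1).card := by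
          refine Finset.sum_le_sum fun i _ => ?_
          exact Nat.mul_le_mul_left 2 (galaxy_edges_le_leaves (F i) (hgal i))
      _ = 2 * ∑ i, (Finset.univ.filter fun v => (F i).degree v = 1).card := by
          rw [Finset.mul_sum]
      _ = 2 * ∑ i, ∑ v : Fin 3 → Bool, if (F i).degree v = 1 then 1 else 0 := by
          congr 1
          exact Finset.sum_congr rfl fun i _ => Finset.card_filter _ _
      _ = 2 * ∑ v : Fin 3 → Bool, ∑ i, if (F i).degree v = 1 then 1 else 0 := by
          rw [Finset.sum_comm]
      _ ≤ 2 * ∑ v : Fin 3 → Bool, 1 := by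
          refine Nat.mul_le_mul_left 2 (Finset.sum_le_sum fun v _ => ?_)
          rw [← Finset.card_filter]
          exact hcard1 v
      _ = 16 := by simp [Finset.card_univ]
  omega
end

section
/- For every graph G, the arboricity of G is at most the star arboricity of G, and the star arboricity of G is at most twice the arboricity of G. -/
/-- The arboricity of `G`: the least `n` such that the edges of `G`
can be partitioned into `n` forests. -/
noncomputable def arboricity {V : Type*} (G : SimpleGraph V) : ℕ :=
  sInf {n | ∃ F : Fin n → SimpleGraph V,
    (∀ i, F i ≤ G) ∧ (∀ i, (F i).IsAcyclic) ∧
    (∀ u v, G.Adj u v → ∃! i, (F i).Adj u v)}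


namespace StarArbAux

open SimpleGraph Walk

variable {V : Type*} {F : SimpleGraph V} {u v w : V}

lemma concat_isPath {p : F.Walk u v} (hp : p.IsPath) (hw : w ∉ p.support)
    (h : F.Adj v w) : (p.concat h).IsPath := by
  rw [← Walk.isPath_reverse_iff, Walk.reverse_concat]
  exact Walk.IsPath.cons hp.reverse (by simpa [Walk.support_reverse] using hw)

/-- No triangles in an acyclic graph. -/
lemma no_triangle (hF : F.IsAcyclic) {a b c : V}
    (h1 : F.Adj a b) (h2 : F.Adj b c) (h3 : F.Adj c a) : False := by
  have hp1 : (Walk.cons h1 (Walk.cons h2 Walk.nil)).IsPath := by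
    simp [Walk.isPath_def, h1.ne, h2.ne, h3.ne']
  have hp2 : (Walk.cons h3.symm Walk.nil : F.Walk a c).IsPath := by
    simp [Walk.isPath_def, h3.ne']
  have := SimpleGraph.isAcyclic_iff_path_unique.mp hF ⟨_, hp1⟩ ⟨_, hp2⟩
  have hlen := congrArg (fun p : F.Path a c => p.1.length) this
  simp at hlen

noncomputable def root (F : SimpleGraph V) (v : V) : V :=
  (F.connectedComponentMk v).out

lemma reachable_root (F : SimpleGraph V) (v : V) : F.Reachable (root F v) v := by
  have : F.connectedComponentMk (root F v) = F.connectedComponentMk v :=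
    Quot.out_eq _
  exact (SimpleGraph.ConnectedComponent.eq).mp this

lemma root_eq_of_adj (h : F.Adj u v) : root F u = root F v := by
  unfold root
  rw [SimpleGraph.ConnectedComponent.sound h.reachable]

noncomputable def depth (F : SimpleGraph V) (v : V) : ℕ :=
  F.dist (root F v) v

lemma depth_le_succ (h : F.Adj u v) : depth F v ≤ depth F u + 1 := by
  obtain ⟨p, hp⟩ := (reachable_root F u).exists_walk_length_eq_dist
  have := SimpleGraph.dist_le ((p.concat h).copy (root_eq_of_adj h) rfl)
  simpa [depth, Walk.length_concat, hp] using this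

lemma depth_ne (hF : F.IsAcyclic) (h : F.Adj u v) : depth F u ≠ depth F v := by
  classical
  intro he
  obtain ⟨p, hp, hpl⟩ := (reachable_root F u).exists_path_of_dist
  obtain ⟨q, hq, hql⟩ := (reachable_root F v).exists_path_of_dist
  have hrv : root F v = root F u := (root_eq_of_adj h).symm
  have hq'p : (q.copy hrv rfl).IsPath := (Walk.isPath_copy q hrv rfl).mpr hq
  have hq'l : (q.copy hrv rfl).length = depth F v := by simpa [depth] using hql
  have hu : u ∉ (q.copy hrv rfl).support := by
    intro hmem
    have h1 : F.dist (root F u) u ≤ ((q.copy hrv rfl).takeUntil u hmem).length :=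
      SimpleGraph.dist_le _
    have h3 : ((q.copy hrv rfl).takeUntil u hmem).length
        + ((q.copy hrv rfl).dropUntil u hmem).length = (q.copy hrv rfl).length := by
      have := congrArg Walk.length ((q.copy hrv rfl).take_spec hmem)
      simpa [Walk.length_append] using this
    have hdru : F.dist (root F u) u = depth F u := rfl
    have h4 : ((q.copy hrv rfl).dropUntil u hmem).length = 0 := by omega
    exact h.ne (Walk.eq_of_length_eq_zero h4)
  have hcp : ((q.copy hrv rfl).concat h.symm).IsPath := concat_isPath hq'p hu h.symm
  have heq := SimpleGraph.isAcyclic_iff_path_unique.mp hF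
    ⟨p, hp⟩ ⟨(q.copy hrv rfl).concat h.symm, hcp⟩
  have hlen := congrArg (fun p : F.Path (root F u) u => p.1.length) heq
  simp only [Walk.length_concat] at hlen
  have hdru : F.dist (root F u) u = depth F u := rfl
  omega

lemma unique_parent (hF : F.IsAcyclic) {b c d : V}
    (hbc : F.Adj b c) (hdc : F.Adj d c)
    (h1 : depth F b + 1 = depth F c) (h2 : depth F d + 1 = depth F c) :
    b = d := by
  classical
  obtain ⟨p, hp, hpl⟩ := (reachable_root F b).exists_path_of_dist
  obtain ⟨q, hq, hql⟩ := (reachable_root F d).exists_path_of_dist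
  have hrb : root F b = root F c := root_eq_of_adj hbc
  have hrd : root F d = root F c := root_eq_of_adj hdc
  have hp'p : (p.copy hrb rfl).IsPath := (Walk.isPath_copy p hrb rfl).mpr hp
  have hq'p : (q.copy hrd rfl).IsPath := (Walk.isPath_copy q hrd rfl).mpr hq
  have hp'l : (p.copy hrb rfl).length = depth F b := by simpa [depth] using hpl
  have hq'l : (q.copy hrd rfl).length = depth F d := by simpa [depth] using hql
  have hdrc : F.dist (root F c) c = depth F c := rfl
  have hcp : c ∉ (p.copy hrb rfl).support := by
    intro hmem
    have hx1 : F.dist (root F c) c ≤ ((p.copy hrb rfl).takeUntil c hmem).length :=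
      SimpleGraph.dist_le _
    have hx2 := Walk.length_takeUntil_le (p.copy hrb rfl) hmem
    omega
  have hcq : c ∉ (q.copy hrd rfl).support := by
    intro hmem
    have hx1 : F.dist (root F c) c ≤ ((q.copy hrd rfl).takeUntil c hmem).length :=
      SimpleGraph.dist_le _
    have hx2 := Walk.length_takeUntil_le (q.copy hrd rfl) hmem
    omega
  have e1 : ((p.copy hrb rfl).concat hbc).IsPath := concat_isPath hp'p hcp hbc
  have e2 : ((q.copy hrd rfl).concat hdc).IsPath := concat_isPath hq'p hcq hdc
  have heq := SimpleGraph.isAcyclic_iff_path_unique.mp hF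
    ⟨(p.copy hrb rfl).concat hbc, e1⟩ ⟨(q.copy hrd rfl).concat hdc, e2⟩
  have hw : (p.copy hrb rfl).concat hbc = (q.copy hrd rfl).concat hdc :=
    congrArg Subtype.val heq
  obtain ⟨hv, -⟩ := Walk.concat_inj hw
  exact hv

lemma isAcyclic_of_isGalaxy (h : IsGalaxy F) : F.IsAcyclic := by
  intro v w hw
  cases w with
  | nil => exact hw.ne_nil rfl
  | cons h1 p =>
    cases p with
    | nil => simpa using hw.three_le_length
    | cons h2 q =>
      cases q with
      | nil => simpa using hw.three_le_length
      | cons h3 r =>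
        have hnd := hw.support_nodup
        simp only [Walk.support_cons, List.tail_cons, List.nodup_cons] at hnd
        rcases h.2 _ _ _ _ h1 h2 h3 with hvb | hax
        · exact hnd.2.1 (hvb ▸ r.end_mem_support)
        · exact hnd.1 (by rw [hax]; exact List.mem_cons_of_mem _ r.start_mem_support)

noncomputable def galaxyOf (F : SimpleGraph V) (k : ℕ) : SimpleGraph V where
  Adj u v := F.Adj u v ∧ min (depth F u) (depth F v) % 2 = k
  symm := ⟨fun u v ⟨h, hk⟩ => ⟨h.symm, by rwa [min_comm]⟩⟩
  loopless := ⟨fun v h => F.loopless.irrefl v h.1⟩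

lemma galaxyOf_le (F : SimpleGraph V) (k : ℕ) : galaxyOf F k ≤ F :=
  fun _ _ h => And.left h

lemma depth_step (hF : F.IsAcyclic) (h : F.Adj u v) :
    depth F u + 1 = depth F v ∨ depth F v + 1 = depth F u := by
  have h1 := depth_le_succ h
  have h2 := depth_le_succ h.symm
  have h3 := depth_ne hF h
  omega

lemma galaxyOf_isGalaxy (hF : F.IsAcyclic) (k : ℕ) : IsGalaxy (galaxyOf F k) := by
  constructor
  · rintro a b c (⟨h1, -⟩ : _ ∧ _) (⟨h2, -⟩ : _ ∧ _) (⟨h3, -⟩ : _ ∧ _)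
    exact no_triangle hF h1 h2 h3
  · rintro a b c d (⟨h1, k1⟩ : _ ∧ _) (⟨h2, k2⟩ : _ ∧ _) (⟨h3, k3⟩ : _ ∧ _)
    have e1 := depth_step hF h1
    have e2 := depth_step hF h2
    have e3 := depth_step hF h3
    rcases e1 with e1 | e1 <;> rcases e2 with e2 | e2
    · exfalso; omega
    · exact Or.inl (unique_parent hF h1 h2.symm e1 e2)
    · rcases e3 with e3 | e3
      · exfalso; omega
      · exact Or.inr (unique_parent hF h2 h3.symm e2 e3)
    · exfalso; omega

lemma starSet_nonempty [Fintype V] (G : SimpleGraph V) :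
    {n | ∃ F : Fin n → SimpleGraph V,
      (∀ i, F i ≤ G) ∧ (∀ i, IsGalaxy (F i)) ∧
      (∀ u v, G.Adj u v → ∃! i, (F i).Adj u v)}.Nonempty := by
  classical
  haveI : Fintype G.edgeSet := Fintype.ofFinite _
  set e : G.edgeSet ≃ Fin (Fintype.card G.edgeSet) := Fintype.equivFin G.edgeSet
  refine ⟨Fintype.card G.edgeSet,
    fun i => SimpleGraph.fromEdgeSet {(e.symm i : Sym2 V)}, ?_, ?_, ?_⟩
  · intro i a b h
    rw [SimpleGraph.fromEdgeSet_adj, Set.mem_singleton_iff] at h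
    have hm := (e.symm i).2
    rw [← h.1] at hm
    exact hm
  · intro i
    have key : ∀ a b c : V, (SimpleGraph.fromEdgeSet {(e.symm i : Sym2 V)}).Adj a b →
        (SimpleGraph.fromEdgeSet {(e.symm i : Sym2 V)}).Adj b c → a = c := by
      intro a b c ha hb
      rw [SimpleGraph.fromEdgeSet_adj, Set.mem_singleton_iff] at ha hb
      have := Sym2.eq_iff.mp (ha.1.trans hb.1.symm)
      rcases this with ⟨rfl, rfl⟩ | ⟨rfl, -⟩
      · exact absurd rfl ha.2
      · rfl
    constructor
    · intro a b c ha hb hc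
      have : a = c := key a b c ha hb
      subst this
      exact (SimpleGraph.fromEdgeSet _).loopless.irrefl _ hc.symm
    · intro a b c d ha hb _
      exact Or.inl (key a b c ha hb)
  · intro a b h
    refine ⟨e ⟨s(a, b), h⟩, ?_, ?_⟩
    · show (SimpleGraph.fromEdgeSet _).Adj a b
      rw [SimpleGraph.fromEdgeSet_adj, Set.mem_singleton_iff]
      exact ⟨by rw [Equiv.symm_apply_apply], h.ne⟩
    · intro j hj
      have hj : (SimpleGraph.fromEdgeSet {(e.symm j : Sym2 V)}).Adj a b := hj
      rw [SimpleGraph.fromEdgeSet_adj, Set.mem_singleton_iff] at hj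
      have : e.symm j = ⟨s(a, b), h⟩ := Subtype.ext hj.1.symm
      rw [← this, Equiv.apply_symm_apply]

end StarArbAux

/-- $a(G) \le sa(G) \le 2a(G)$ for every graph $G$. -/
theorem arboricity_le_starArboricity_le_two_mul {V : Type*} [Fintype V]
    (G : SimpleGraph V) :
    arboricity G ≤ starArboricity G ∧ starArboricity G ≤ 2 * arboricity G := by
  classical
  open StarArbAux in
  have hsub : {n | ∃ F : Fin n → SimpleGraph V,
      (∀ i, F i ≤ G) ∧ (∀ i, IsGalaxy (F i)) ∧
      (∀ u v, G.Adj u v → ∃! i, (F i).Adj u v)} ⊆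
      {n | ∃ F : Fin n → SimpleGraph V,
      (∀ i, F i ≤ G) ∧ (∀ i, (F i).IsAcyclic) ∧
      (∀ u v, G.Adj u v → ∃! i, (F i).Adj u v)} := by
    rintro n ⟨F, hle, hgal, huniq⟩
    exact ⟨F, hle, fun i => isAcyclic_of_isGalaxy (hgal i), huniq⟩
  have hne := starSet_nonempty G
  have hane : {n | ∃ F : Fin n → SimpleGraph V,
      (∀ i, F i ≤ G) ∧ (∀ i, (F i).IsAcyclic) ∧
      (∀ u v, G.Adj u v → ∃! i, (F i).Adj u v)}.Nonempty :=
    ⟨_, hsub (Nat.sInf_mem hne)⟩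
  constructor
  · exact Nat.sInf_le (hsub (Nat.sInf_mem hne))
  · obtain ⟨F, hle, hac, huniq⟩ := Nat.sInf_mem hane
    apply Nat.sInf_le
    refine ⟨fun j => galaxyOf (F ((finProdFinEquiv.symm j).2))
      ((finProdFinEquiv.symm j).1 : ℕ), ?_, ?_, ?_⟩
    · exact fun j => le_trans (galaxyOf_le _ _) (hle _)
    · exact fun j => galaxyOf_isGalaxy (hac _) _
    · intro a b h
      obtain ⟨i, hi, hiu⟩ := huniq a b h
      set k : ℕ := min (depth (F i) a) (depth (F i) b) % 2 with hk
      have hk2 : k < 2 := Nat.mod_lt _ (by norm_num)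
      refine ⟨finProdFinEquiv (⟨k, hk2⟩, i), ?_, ?_⟩
      · simp only [Equiv.symm_apply_apply]
        exact And.intro hi rfl
      · intro j hj
        obtain ⟨hadj, hkeq⟩ : _ ∧ _ := hj
        have hieq : (finProdFinEquiv.symm j).2 = i := hiu _ hadj
        rw [hieq] at hkeq
        have hkval : ((finProdFinEquiv.symm j).1 : ℕ) = k := hkeq.symm
        have : finProdFinEquiv.symm j = (⟨k, hk2⟩, i) := by
          refine Prod.ext ?_ hieq
          exact Fin.ext hkval
        exact (Equiv.symm_apply_eq _).mp this
end

section
/- For n ≥ 4, the star arboricity of the complete graph K_n equals ⌈n/2⌉ + 1. -/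
section Construction

/-- Half of the adjacency relation for the `i`-th star forest. -/
def conP (k i : ℕ) (u v : Fin k × Bool) : Prop :=
  u.1.val = i ∧ ((i < v.1.val ∧ u.2 = v.2) ∨ (v.1.val < i ∧ u.2 ≠ v.2))

instance (k i : ℕ) (u v : Fin k × Bool) : Decidable (conP k i u v) := by
  unfold conP; infer_instance

lemma conP_ne {k i : ℕ} {u v : Fin k × Bool} (h : conP k i u v) : v.1.val ≠ i := by
  obtain ⟨h1, h2 | h2⟩ := h <;> omega

/-- The `i`-th star forest in a decomposition of the complete graph on
`Fin k × Bool` into `k + 1` star forests. -/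
def conGraph (k : ℕ) (i : Fin (k + 1)) : SimpleGraph (Fin k × Bool) where
  Adj u v := if i.val = k then u.1 = v.1 ∧ u.2 ≠ v.2
             else conP k i.val u v ∨ conP k i.val v u
  symm := by
    constructor; intro u v h
    split_ifs at h ⊢ with hik
    · exact ⟨h.1.symm, fun e => h.2 e.symm⟩
    · exact h.symm
  loopless := by
    constructor; intro u h
    split_ifs at h with hik
    · exact h.2 rfl
    · rcases h with h | h <;> exact conP_ne h h.1

lemma conP_det {k i : ℕ} {u v w : Fin k × Bool} (h1 : conP k i u v) (h2 : conP k i w v) :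
    u = w := by
  obtain ⟨hu, hc1⟩ := h1
  obtain ⟨hw, hc2⟩ := h2
  have hfst : u.1 = w.1 := Fin.ext (hu.trans hw.symm)
  have hsnd : u.2 = w.2 := by
    rcases hc1 with ⟨h, e⟩ | ⟨h, e⟩ <;> rcases hc2 with ⟨h', e'⟩ | ⟨h', e'⟩ <;>
      first
        | (exact e.trans e'.symm)
        | omega
        | (cases hu2 : u.2 <;> cases hw2 : w.2 <;> cases hv2 : v.2 <;> simp_all)
  exact Prod.ext hfst hsnd

lemma con_adj_last {k : ℕ} {u v : Fin k × Bool} :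
    (conGraph k (Fin.last k)).Adj u v ↔ u.1 = v.1 ∧ u.2 ≠ v.2 := by
  show (if _ then _ else _) ↔ _
  rw [if_pos (Fin.val_last k)]

lemma con_adj_lt {k : ℕ} {i : Fin (k + 1)} (hi : i.val < k) {u v : Fin k × Bool} :
    (conGraph k i).Adj u v ↔ conP k i.val u v ∨ conP k i.val v u := by
  show (if _ then _ else _) ↔ _
  rw [if_neg (by omega)]

lemma con_galaxy (k : ℕ) (i : Fin (k + 1)) : IsGalaxy (conGraph k i) := by
  rcases eq_or_lt_of_le (Nat.lt_succ_iff.mp i.2) with hik | hik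
  · -- the matching
    constructor
    · intro a b c hab hbc hca
      rw [show i = Fin.last k from Fin.ext hik, con_adj_last] at hab hbc hca
      obtain ⟨h1, h2⟩ := hab
      obtain ⟨h3, h4⟩ := hbc
      obtain ⟨h5, h6⟩ := hca
      cases hA : a.2 <;> cases hB : b.2 <;> cases hC : c.2 <;> simp_all
    · intro a b c d hab hbc _
      rw [show i = Fin.last k from Fin.ext hik, con_adj_last] at hab hbc
      left
      refine Prod.ext (hab.1.trans hbc.1) ?_
      cases hA : a.2 <;> cases hB : b.2 <;> cases hC : c.2 <;> simp_all
  · -- a two-star forest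
    constructor
    · intro a b c hab hbc hca
      rw [con_adj_lt hik] at hab hbc hca
      rcases hab with h1 | h1 <;> rcases hbc with h2 | h2 <;> rcases hca with h3 | h3 <;>
        [skip; skip; skip; skip; skip; skip; skip; skip] <;>
        first
          | exact conP_ne h2 h1.1
          | exact conP_ne h1 h2.1
          | exact conP_ne h3 h2.1
          | exact conP_ne h2 h3.1
          | exact conP_ne h1 h3.1
          | exact conP_ne h3 h1.1
    · intro a b c d hab hbc hcd
      rw [con_adj_lt hik] at hab hbc hcd
      by_cases hb : b.1.val = i.val
      · -- b is a center; then so is d, and b = d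
        have hbc' : conP k i.val b c := by
          rcases hbc with h | h
          · exact h
          · exact absurd hb (conP_ne h)
        have hcd' : conP k i.val d c := by
          rcases hcd with h | h
          · exact absurd h.1 (by have := conP_ne hbc'; intro hh; exact this hh)
          · exact h
        exact Or.inr (conP_det hbc' hcd')
      · -- a and c are centers, and a = c
        have hab' : conP k i.val a b := by
          rcases hab with h | h
          · exact h
          · exact absurd h.1 hb
        have hbc' : conP k i.val c b := by
          rcases hbc with h | h
          · exact absurd h.1 hb
          · exact h
        exact Or.inl (conP_det hab' hbc')

lemma con_cover (k : ℕ) (u v : Fin k × Bool) (huv : u ≠ v) :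
    ∃! i : Fin (k + 1), (conGraph k i).Adj u v := by
  by_cases h1 : u.1 = v.1
  · -- the matching covers it
    have h2 : u.2 ≠ v.2 := by
      intro h2
      exact huv (Prod.ext h1 h2)
    refine ⟨Fin.last k, con_adj_last.mpr ⟨h1, h2⟩, ?_⟩
    intro j hj
    rcases eq_or_lt_of_le (Nat.lt_succ_iff.mp j.2) with hjk | hjk
    · exact Fin.ext hjk
    · rw [con_adj_lt hjk] at hj
      rcases hj with h | h <;>
      · have := h.1
        have := conP_ne h
        rw [h1] at *
        omega
  · -- a two-star forest covers it
    have hne : u.1.val ≠ v.1.val := fun h => h1 (Fin.ext h)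
    set iv : ℕ := if u.2 = v.2 then min u.1.val v.1.val else max u.1.val v.1.val with hiv
    have hivk : iv < k := by
      rcases le_or_gt u.1.val v.1.val with h | h <;>
        · rw [hiv]
          split_ifs <;> simp [min_def, max_def] <;> split_ifs <;>
            first | exact u.1.2 | exact v.1.2
    have hiv1 : iv < k + 1 := by omega
    refine ⟨⟨iv, hiv1⟩, ?_, ?_⟩
    · show (conGraph k ⟨iv, hiv1⟩).Adj u v
      rw [con_adj_lt (i := ⟨iv, hiv1⟩) hivk]
      by_cases h2 : u.2 = v.2
      · rcases Nat.lt_or_ge u.1.val v.1.val with h | h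
        · exact Or.inl ⟨by simp [hiv, h2]; omega, Or.inl ⟨by simp [hiv, h2]; omega, h2⟩⟩
        · exact Or.inr ⟨by simp [hiv, h2]; omega, Or.inl ⟨by simp [hiv, h2]; omega, h2.symm⟩⟩
      · rcases Nat.lt_or_ge u.1.val v.1.val with h | h
        · exact Or.inr ⟨by simp [hiv, h2]; omega, Or.inr ⟨by simp [hiv, h2]; omega, fun e => h2 e.symm⟩⟩
        · exact Or.inl ⟨by simp [hiv, h2]; omega, Or.inr ⟨by simp [hiv, h2]; omega, h2⟩⟩
    · intro j hj
      rcases eq_or_lt_of_le (Nat.lt_succ_iff.mp j.2) with hjk | hjk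
      · rw [show j = Fin.last k from Fin.ext hjk, con_adj_last] at hj
        exact absurd hj.1 h1
      · rw [con_adj_lt hjk] at hj
        apply Fin.ext
        show j.val = iv
        rcases hj with ⟨hj1, ⟨hj2, hj3⟩ | ⟨hj2, hj3⟩⟩ | ⟨hj1, ⟨hj2, hj3⟩ | ⟨hj2, hj3⟩⟩ <;>
          rw [hiv] <;> split_ifs with hb <;>
          first
            | omega
            | (exfalso; cases hU : u.2 <;> cases hV : v.2 <;> simp_all)

end Construction
section Lower

open Finset
open scoped Classical

variable {V : Type*} [Fintype V]

noncomputable def nbr (F : SimpleGraph V) (v : V) : Finset V :=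
  Finset.univ.filter (fun u => F.Adj v u)

lemma mem_nbr {F : SimpleGraph V} {v u : V} : u ∈ nbr F v ↔ F.Adj v u := by
  simp [nbr]

noncomputable def gdeg (F : SimpleGraph V) (v : V) : ℕ := (nbr F v).card

noncomputable def ctr (F : SimpleGraph V) : Finset V :=
  Finset.univ.filter (fun v => 2 ≤ gdeg F v)

lemma no_two_centers {F : SimpleGraph V} (hF : IsGalaxy F) {u v : V} (h : F.Adj u v)
    (hu : 2 ≤ gdeg F u) (hv : 2 ≤ gdeg F v) : False := by
  unfold gdeg at hu hv
  obtain ⟨a, ha, hav⟩ := Finset.exists_mem_ne (by omega : 1 < (nbr F u).card) v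
  obtain ⟨b, hb, hbu⟩ := Finset.exists_mem_ne (by omega : 1 < (nbr F v).card) u
  rw [mem_nbr] at ha hb
  rcases hF.2 a u v b ha.symm h hb with h' | h'
  · exact hav h'
  · exact hbu h'.symm

lemma nbr_subset_erase (F : SimpleGraph V) (v : V) : nbr F v ⊆ Finset.univ.erase v := by
  intro u hu
  rw [mem_nbr] at hu
  exact Finset.mem_erase.mpr ⟨hu.ne', Finset.mem_univ u⟩

lemma ctr_compl_card (F : SimpleGraph V) :
    (ctr F).card + (Finset.univ.filter (fun v => ¬ 2 ≤ gdeg F v)).card = Fintype.card V := by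
  rw [ctr, ← Finset.card_univ (α := V)]
  exact Finset.card_filter_add_card_filter_not _

lemma ctr_sum (F : SimpleGraph V) (hF : IsGalaxy F) :
    ∑ v ∈ ctr F, gdeg F v ≤ Fintype.card V - (ctr F).card := by
  have hdisj : ∀ x ∈ ctr F, ∀ y ∈ ctr F, x ≠ y → Disjoint (nbr F x) (nbr F y) := by
    intro x hx y hy hxy
    rw [Finset.disjoint_left]
    intro u hux huy
    rw [mem_nbr] at hux huy
    have h2 : 2 ≤ gdeg F u :=
      Finset.one_lt_card.mpr ⟨x, mem_nbr.mpr hux.symm, y, mem_nbr.mpr huy.symm, hxy⟩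
    simp [ctr] at hx
    exact no_two_centers hF hux hx h2
  have hsum : ∑ v ∈ ctr F, gdeg F v = ((ctr F).biUnion (nbr F)).card :=
    (Finset.card_biUnion hdisj).symm
  have hsub : (ctr F).biUnion (nbr F) ⊆ Finset.univ.filter (fun v => ¬ 2 ≤ gdeg F v) := by
    intro u hu
    rw [Finset.mem_biUnion] at hu
    obtain ⟨c, hc, hcu⟩ := hu
    rw [mem_nbr] at hcu
    simp only [Finset.mem_filter, Finset.mem_univ, true_and]
    intro h2
    simp [ctr] at hc
    exact no_two_centers hF hcu hc h2
  have hcard := ctr_compl_card F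
  have := Finset.card_le_card hsub
  rw [hsum]
  omega

lemma nonctr_sum (F : SimpleGraph V) :
    ∑ v ∈ Finset.univ.filter (fun v => ¬ 2 ≤ gdeg F v), gdeg F v
      ≤ Fintype.card V - (ctr F).card := by
  have h1 : ∑ v ∈ Finset.univ.filter (fun v => ¬ 2 ≤ gdeg F v), gdeg F v
      ≤ (Finset.univ.filter (fun v => ¬ 2 ≤ gdeg F v)).card • 1 := by
    apply Finset.sum_le_card_nsmul
    intro x hx
    simp only [Finset.mem_filter] at hx
    omega
  have hcard := ctr_compl_card F
  simp only [smul_eq_mul, mul_one] at h1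
  omega

lemma sum_split (F : SimpleGraph V) :
    ∑ v ∈ ctr F, gdeg F v + ∑ v ∈ Finset.univ.filter (fun v => ¬ 2 ≤ gdeg F v), gdeg F v
      = ∑ v, gdeg F v :=
  Finset.sum_filter_add_sum_filter_not _ _ _

lemma galaxy_sum_le (F : SimpleGraph V) (hF : IsGalaxy F) (h2 : 2 ≤ Fintype.card V) :
    ∑ v, gdeg F v ≤ 2 * Fintype.card V - 2 := by
  have ha := ctr_sum F hF
  have hb := nonctr_sum F
  have hc := sum_split F
  rcases Nat.eq_zero_or_pos (ctr F).card with h0 | h0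
  · have he : ctr F = ∅ := Finset.card_eq_zero.mp h0
    have hz : ∑ v ∈ ctr F, gdeg F v = 0 := by rw [he]; simp
    omega
  · have := Finset.card_le_univ (ctr F)
    omega

lemma galaxy_struct (F : SimpleGraph V) (hF : IsGalaxy F) (h4 : 4 ≤ Fintype.card V)
    (hS : 2 * Fintype.card V - 3 ≤ ∑ v, gdeg F v) :
    ∃ c, ∀ u, u ≠ c → F.Adj c u ∧ gdeg F u = 1 := by
  have ha := ctr_sum F hF
  have hb := nonctr_sum F
  have hc := sum_split F
  have hcard := ctr_compl_card F
  have hcle := Finset.card_le_univ (ctr F)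
  -- |C| = 1
  have hC1 : (ctr F).card = 1 := by
    rcases Nat.eq_zero_or_pos (ctr F).card with h0 | h0
    · have he : ctr F = ∅ := Finset.card_eq_zero.mp h0
      have hz : ∑ v ∈ ctr F, gdeg F v = 0 := by rw [he]; simp
      omega
    · omega
  obtain ⟨c, hc1⟩ := Finset.card_eq_one.mp hC1
  have hctr_iff : ∀ v, (2 ≤ gdeg F v ↔ v = c) := by
    intro v
    constructor
    · intro h
      have : v ∈ ctr F := by simp [ctr]; exact h
      rw [hc1] at this; simpa using this
    · intro h
      have : c ∈ ctr F := by rw [hc1]; simp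
      subst h
      simpa [ctr] using this
  have hsumC : ∑ v ∈ ctr F, gdeg F v = gdeg F c := by rw [hc1]; simp
  -- degree of c is n - 1
  have hdegc : Fintype.card V - 1 ≤ gdeg F c := by
    by_contra hcon
    push_neg at hcon
    have hsub := nbr_subset_erase F c
    have herase : (Finset.univ.erase c).card = Fintype.card V - 1 := by
      rw [Finset.card_erase_of_mem (Finset.mem_univ c), Finset.card_univ]
    have hss : nbr F c ⊂ Finset.univ.erase c := by
      refine lt_of_le_of_ne hsub ?_
      intro he
      unfold gdeg at hcon
      rw [he, herase] at hcon
      omega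
    obtain ⟨u, hu, hunb⟩ := Finset.exists_of_ssubset hss
    have huc : u ≠ c := (Finset.mem_erase.mp hu).1
    have hcu : ¬ F.Adj c u := fun h => hunb (mem_nbr.mpr h)
    have hunotc : u ∈ Finset.univ.filter (fun v => ¬ 2 ≤ gdeg F v) := by
      simp only [Finset.mem_filter, Finset.mem_univ, true_and]
      intro h2; exact huc ((hctr_iff u).mp h2)
    -- bound the non-center sum more carefully
    have hkey : gdeg F c + ∑ v ∈ Finset.univ.filter (fun v => ¬ 2 ≤ gdeg F v), gdeg F v
        ≤ 2 * Fintype.card V - 4 := by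
      rcases Nat.eq_zero_or_pos (gdeg F u) with hdu | hdu
      · -- u has degree 0
        have hrest : ∑ v ∈ (Finset.univ.filter (fun v => ¬ 2 ≤ gdeg F v)).erase u, gdeg F v
            ≤ Fintype.card V - 2 := by
          have h1 : ∀ x ∈ (Finset.univ.filter (fun v => ¬ 2 ≤ gdeg F v)).erase u,
              gdeg F x ≤ 1 := by
            intro x hx
            have := (Finset.mem_filter.mp (Finset.mem_of_mem_erase hx)).2
            omega
          calc ∑ v ∈ (Finset.univ.filter (fun v => ¬ 2 ≤ gdeg F v)).erase u, gdeg F v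
              ≤ ((Finset.univ.filter (fun v => ¬ 2 ≤ gdeg F v)).erase u).card • 1 :=
                Finset.sum_le_card_nsmul _ _ _ h1
            _ ≤ Fintype.card V - 2 := by
                have := Finset.card_erase_of_mem hunotc
                simp only [smul_eq_mul, mul_one]
                omega
        have hsplit := Finset.add_sum_erase _ (gdeg F) hunotc
        have hgc : gdeg F c ≤ Fintype.card V - 2 := by
          have := Finset.card_le_card (nbr_subset_erase F c)
          rw [Finset.card_erase_of_mem (Finset.mem_univ c), Finset.card_univ] at this
          unfold gdeg at *
          omega
        unfold gdeg at *
        omega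
      · -- u has a neighbor w ≠ c
        have hpos : 0 < (nbr F u).card := by unfold gdeg at hdu; omega
        obtain ⟨w, hw⟩ := Finset.card_pos.mp hpos
        rw [mem_nbr] at hw
        have hwc : w ≠ c := by
          intro he; rw [he] at hw; exact hcu hw.symm
        have hwdeg : gdeg F w ≤ 1 := by
          by_contra hcon2
          exact hwc ((hctr_iff w).mp (by omega))
        have hncw : ¬ F.Adj c w := by
          intro hadj
          have : 2 ≤ gdeg F w := Finset.one_lt_card.mpr
            ⟨c, mem_nbr.mpr hadj.symm, u, mem_nbr.mpr hw.symm, huc.symm⟩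
          omega
        have hwu : w ≠ u := hw.ne'
        have hsub3 : nbr F c ⊆ ((Finset.univ.erase c).erase u).erase w := by
          intro x hx
          rw [mem_nbr] at hx
          refine Finset.mem_erase.mpr ⟨?_, Finset.mem_erase.mpr ⟨?_, Finset.mem_erase.mpr ⟨hx.ne', Finset.mem_univ x⟩⟩⟩
          · intro he; rw [he] at hx; exact hncw hx
          · intro he; rw [he] at hx; exact hcu hx
        have hcard3 : (((Finset.univ.erase c).erase u).erase w).card = Fintype.card V - 3 := by
          rw [Finset.card_erase_of_mem, Finset.card_erase_of_mem, Finset.card_erase_of_mem (Finset.mem_univ c), Finset.card_univ]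
          · omega
          · exact Finset.mem_erase.mpr ⟨huc, Finset.mem_univ u⟩
          · exact Finset.mem_erase.mpr ⟨hwu, Finset.mem_erase.mpr ⟨hwc, Finset.mem_univ w⟩⟩
        have hgc : gdeg F c ≤ Fintype.card V - 3 := by
          have := Finset.card_le_card hsub3
          unfold gdeg
          omega
        omega
    omega
  -- conclude
  have hnbrc : nbr F c = Finset.univ.erase c := by
    apply Finset.eq_of_subset_of_card_le (nbr_subset_erase F c)
    rw [Finset.card_erase_of_mem (Finset.mem_univ c), Finset.card_univ]
    exact hdegc
  refine ⟨c, fun u hu => ⟨?_, ?_⟩⟩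
  · rw [← mem_nbr, hnbrc]
    exact Finset.mem_erase.mpr ⟨hu, Finset.mem_univ u⟩
  · have h1 : 1 ≤ gdeg F u := by
      have : F.Adj c u := by
        rw [← mem_nbr, hnbrc]; exact Finset.mem_erase.mpr ⟨hu, Finset.mem_univ u⟩
      exact Finset.card_pos.mpr ⟨c, mem_nbr.mpr this.symm⟩
    by_contra hcon2
    exact hu ((hctr_iff u).mp (by omega))

lemma cover_sum {ι : Type*} [Fintype ι] (F : ι → SimpleGraph V)
    (hcov : ∀ u v : V, u ≠ v → ∃! i, (F i).Adj u v) (v : V) :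
    ∑ i, gdeg (F i) v = Fintype.card V - 1 := by
  have hdisj : ∀ i ∈ (Finset.univ : Finset ι), ∀ j ∈ (Finset.univ : Finset ι), i ≠ j →
      Disjoint (nbr (F i) v) (nbr (F j) v) := by
    intro i _ j _ hij
    rw [Finset.disjoint_left]
    intro u hui huj
    rw [mem_nbr] at hui huj
    obtain ⟨i0, _, huniq⟩ := hcov v u hui.ne
    exact hij ((huniq i hui).trans (huniq j huj).symm)
  have hun : Finset.univ.biUnion (fun i => nbr (F i) v) = Finset.univ.erase v := by
    ext u
    simp only [Finset.mem_biUnion, Finset.mem_univ, true_and, Finset.mem_erase, and_true]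
    constructor
    · rintro ⟨i, hi⟩
      rw [mem_nbr] at hi
      exact hi.ne'
    · intro huv
      obtain ⟨i, hi, -⟩ := hcov v u (Ne.symm huv)
      exact ⟨i, mem_nbr.mpr hi⟩
  have := Finset.card_biUnion hdisj
  rw [hun, Finset.card_erase_of_mem (Finset.mem_univ v), Finset.card_univ] at this
  unfold gdeg
  omega

lemma total_sum {ι : Type*} [Fintype ι] (F : ι → SimpleGraph V)
    (hcov : ∀ u v : V, u ≠ v → ∃! i, (F i).Adj u v) :
    ∑ i, ∑ v, gdeg (F i) v = Fintype.card V * (Fintype.card V - 1) := by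
  rw [Finset.sum_comm]
  have : ∀ v ∈ (Finset.univ : Finset V), ∑ i, gdeg (F i) v = Fintype.card V - 1 :=
    fun v _ => cover_sum F hcov v
  rw [Finset.sum_congr rfl this, Finset.sum_const, Finset.card_univ, smul_eq_mul]

lemma even_case {ι : Type*} [Fintype ι] (F : ι → SimpleGraph V)
    (hV2 : Fintype.card V = 2 * Fintype.card ι) (hι : 2 ≤ Fintype.card ι)
    (hgal : ∀ i, IsGalaxy (F i))
    (hcov : ∀ u v : V, u ≠ v → ∃! i, (F i).Adj u v) : False := by
  have h4 : 4 ≤ Fintype.card V := by omega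
  have htot := total_sum F hcov
  have hle : ∀ i, ∑ v, gdeg (F i) v ≤ 2 * Fintype.card V - 2 :=
    fun i => galaxy_sum_le (F i) (hgal i) (by omega)
  have hmul : Fintype.card V * (Fintype.card V - 1)
      = Fintype.card ι * (2 * Fintype.card V - 2) := by
    have ha : 2 * Fintype.card V - 2 = 2 * (Fintype.card V - 1) := by omega
    rw [ha, hV2]
    generalize (2 * Fintype.card ι - 1) = b
    ring
  have heq : ∀ i, ∑ v, gdeg (F i) v = 2 * Fintype.card V - 2 := by
    intro i
    by_contra hne
    have hlt : ∑ v, gdeg (F i) v < 2 * Fintype.card V - 2 :=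
      lt_of_le_of_ne (hle i) hne
    have hstrict : ∑ i, ∑ v, gdeg (F i) v
        < ∑ _i : ι, (2 * Fintype.card V - 2) :=
      Finset.sum_lt_sum (fun j _ => hle j) ⟨i, Finset.mem_univ i, hlt⟩
    rw [Finset.sum_const, Finset.card_univ, smul_eq_mul] at hstrict
    omega
  have hstar : ∀ i, ∃ c, ∀ u, u ≠ c → (F i).Adj c u ∧ gdeg (F i) u = 1 := by
    intro i
    exact galaxy_struct (F i) (hgal i) h4 (by rw [heq i]; omega)
  choose c hc using hstar
  obtain ⟨i, j, hij⟩ := Fintype.exists_pair_of_one_lt_card (show 1 < Fintype.card ι by omega)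
  by_cases hcc : c i = c j
  · obtain ⟨u, hu⟩ := Fintype.exists_ne_of_one_lt_card (show 1 < Fintype.card V by omega) (c i)
    have h1 : (F i).Adj (c i) u := (hc i u hu).1
    have h2 : (F j).Adj (c i) u := by
      rw [hcc]
      exact (hc j u (hcc ▸ hu)).1
    obtain ⟨i0, -, huniq⟩ := hcov (c i) u (Ne.symm hu)
    exact hij ((huniq i h1).trans (huniq j h2).symm)
  · have h1 : (F i).Adj (c i) (c j) := (hc i (c j) (Ne.symm hcc)).1
    have h2 : (F j).Adj (c i) (c j) := ((hc j (c i) hcc).1).symm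
    obtain ⟨i0, -, huniq⟩ := hcov (c i) (c j) hcc
    exact hij ((huniq i h1).trans (huniq j h2).symm)

lemma odd_case {ι : Type*} [Fintype ι] [DecidableEq V] [DecidableEq ι]
    (F : ι → SimpleGraph V) (k : ℕ) (hk : 2 ≤ k)
    (hV2 : Fintype.card V = 2 * k + 1) (hι : Fintype.card ι = k + 1)
    (hgal : ∀ i, IsGalaxy (F i))
    (hcov : ∀ u v : V, u ≠ v → ∃! i, (F i).Adj u v) : False := by
  have h4 : 4 ≤ Fintype.card V := by omega
  have htot := total_sum F hcov
  -- find a forest with large degree sum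
  have hbig : ∃ i0, 2 * Fintype.card V - 3 ≤ ∑ v, gdeg (F i0) v := by
    by_contra hno
    push_neg at hno
    have hle : ∀ i ∈ (Finset.univ : Finset ι), ∑ v, gdeg (F i) v ≤ 4 * k - 2 := by
      intro i _
      have := hno i
      omega
    have := Finset.sum_le_card_nsmul _ _ _ hle
    rw [Finset.card_univ, hι, smul_eq_mul] at this
    have hm : Fintype.card V * (Fintype.card V - 1) = (2 * k + 1) * (2 * k) := by
      have h1 : 2 * k + 1 - 1 = 2 * k := by omega
      rw [hV2, h1]
    have hlt : (k + 1) * (4 * k - 2) < (2 * k + 1) * (2 * k) := by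
      obtain ⟨m, hm2⟩ : ∃ m, 4 * k - 2 = m := ⟨_, rfl⟩
      have hm3 : m + 2 = 4 * k := by omega
      rw [hm2]
      nlinarith
    omega
  obtain ⟨i0, hi0⟩ := hbig
  obtain ⟨c, hcstar⟩ := galaxy_struct (F i0) (hgal i0) h4 hi0
  -- restrict to the complement of c and the other forests
  have hcardV' : Fintype.card {v : V // v ≠ c} = 2 * k := by
    have := Fintype.card_subtype_compl (fun v : V => v = c)
    rw [Fintype.card_subtype_eq] at this
    rw [this, hV2]
    omega
  have hcardι' : Fintype.card {i : ι // i ≠ i0} = k := by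
    have := Fintype.card_subtype_compl (fun i : ι => i = i0)
    rw [Fintype.card_subtype_eq] at this
    rw [this, hι]
    omega
  apply even_case (V := {v : V // v ≠ c}) (ι := {i : ι // i ≠ i0})
    (fun j => SimpleGraph.comap (Subtype.val) (F j.1))
  · rw [hcardV', hcardι']
  · omega
  · intro j
    obtain ⟨h1, h2⟩ := hgal j.1
    exact ⟨fun a b cc ha hb => h1 _ _ _ ha hb,
      fun a b cc d ha hb hcc => by
        rcases h2 _ _ _ _ ha hb hcc with h | h
        · exact Or.inl (Subtype.ext h)
        · exact Or.inr (Subtype.ext h)⟩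
  · intro u v huv
    have hne : (u : V) ≠ (v : V) := fun h => huv (Subtype.ext h)
    obtain ⟨i, hi, huniq⟩ := hcov u.1 v.1 hne
    have hne0 : i ≠ i0 := by
      intro he
      subst he
      have hdeg : gdeg (F i) u.1 = 1 := (hcstar u.1 u.2).2
      have h2 : 2 ≤ gdeg (F i) u.1 := Finset.one_lt_card.mpr
        ⟨c, mem_nbr.mpr ((hcstar u.1 u.2).1).symm, v.1, mem_nbr.mpr hi, Ne.symm v.2⟩
      omega
    exact ⟨⟨i, hne0⟩, hi, fun j hj => Subtype.ext (huniq j.1 hj)⟩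

end Lower

lemma bot_galaxy {W : Type*} : IsGalaxy (⊥ : SimpleGraph W) :=
  ⟨fun _ _ _ h => False.elim h, fun _ _ _ _ h => False.elim h⟩

lemma lower_bound (n m : ℕ) (hn : 4 ≤ n) (F : Fin m → SimpleGraph (Fin n))
    (hgal : ∀ i, IsGalaxy (F i))
    (hcov : ∀ u v : Fin n, u ≠ v → ∃! i, (F i).Adj u v) :
    (n + 1) / 2 + 1 ≤ m := by
  by_contra hcon
  push_neg at hcon
  set M := (n + 1) / 2 with hM
  have hmM : m ≤ M := by omega
  set F' : Fin M → SimpleGraph (Fin n) :=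
    fun i => if h : (i : ℕ) < m then F ⟨i, h⟩ else ⊥ with hF'
  have hgal' : ∀ i, IsGalaxy (F' i) := by
    intro i
    rw [hF']
    dsimp only
    split
    · exact hgal _
    · exact bot_galaxy
  have hcov' : ∀ u v : Fin n, u ≠ v → ∃! i, (F' i).Adj u v := by
    intro u v huv
    obtain ⟨i, hi, huniq⟩ := hcov u v huv
    refine ⟨⟨i, lt_of_lt_of_le i.2 hmM⟩, ?_, ?_⟩
    · show (F' _).Adj u v
      rw [hF']
      dsimp only
      rw [dif_pos i.2]
      exact hi
    · intro j hj
      rw [hF'] at hj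
      dsimp only at hj
      by_cases hjm : (j : ℕ) < m
      · rw [dif_pos hjm] at hj
        have := huniq ⟨j, hjm⟩ hj
        exact Fin.ext (by rw [← this])
      · rw [dif_neg hjm] at hj
        exact absurd hj (by simp)
  have hcardn : Fintype.card (Fin n) = n := Fintype.card_fin n
  have hcardM : Fintype.card (Fin M) = M := Fintype.card_fin M
  rcases Nat.even_or_odd n with he | ho
  · obtain ⟨t, ht⟩ := he
    exact even_case F' (by omega) (by omega) hgal' hcov'
  · obtain ⟨t, ht⟩ := ho
    exact odd_case F' t (by omega) (by omega) (by omega) hgal' hcov'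

lemma upper_mem (n : ℕ) :
    ∃ F : Fin ((n + 1) / 2 + 1) → SimpleGraph (Fin n),
      (∀ i, F i ≤ (⊤ : SimpleGraph (Fin n))) ∧ (∀ i, IsGalaxy (F i)) ∧
      (∀ u v, (⊤ : SimpleGraph (Fin n)).Adj u v → ∃! i, (F i).Adj u v) := by
  set k := (n + 1) / 2 with hk
  have hnk : n ≤ 2 * k := by omega
  let e : Fin n → Fin k × Bool :=
    fun v => (⟨v.val / 2, by have := v.2; omega⟩, decide (v.val % 2 = 1))
  have he : Function.Injective e := by
    intro a b hab
    have h1 : a.val / 2 = b.val / 2 := congrArg Fin.val (congrArg Prod.fst hab)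
    have h2 : decide (a.val % 2 = 1) = decide (b.val % 2 = 1) := congrArg Prod.snd hab
    rw [decide_eq_decide] at h2
    have h3 : a.val % 2 = b.val % 2 := by
      rcases Nat.mod_two_eq_zero_or_one a.val with ha | ha <;>
        rcases Nat.mod_two_eq_zero_or_one b.val with hb | hb <;>
        first
          | omega
          | (rw [ha, hb] at h2; simp at h2)
    exact Fin.ext (by omega)
  refine ⟨fun i => SimpleGraph.comap e (conGraph k i), fun i => le_top, fun i => ?_, ?_⟩
  · obtain ⟨g1, g2⟩ := con_galaxy k i
    refine ⟨fun a b c ha hb => g1 _ _ _ ha hb, fun a b c d ha hb hc => ?_⟩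
    rcases g2 _ _ _ _ ha hb hc with h | h
    · exact Or.inl (he h)
    · exact Or.inr (he h)
  · intro u v huv
    rw [SimpleGraph.top_adj] at huv
    obtain ⟨i, hi, huniq⟩ := con_cover k (e u) (e v) (fun h => huv (he h))
    exact ⟨i, hi, fun j hj => huniq j hj⟩

/-- For $n \ge 4$, $sa(K_n) = \lceil n/2 \rceil + 1$. -/
theorem starArboricity_completeGraph (n : ℕ) (hn : 4 ≤ n) :
    starArboricity (⊤ : SimpleGraph (Fin n)) = (n + 1) / 2 + 1 := by
  have hmem : ((n + 1) / 2 + 1) ∈ {m | ∃ F : Fin m → SimpleGraph (Fin n),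
      (∀ i, F i ≤ (⊤ : SimpleGraph (Fin n))) ∧ (∀ i, IsGalaxy (F i)) ∧
      (∀ u v, (⊤ : SimpleGraph (Fin n)).Adj u v → ∃! i, (F i).Adj u v)} := upper_mem n
  apply le_antisymm
  · exact Nat.sInf_le hmem
  · apply le_csInf ⟨_, hmem⟩
    rintro m ⟨F, -, hgal, hcov⟩
    exact lower_bound n m hn F hgal (fun u v huv => hcov u v (by simpa using huv))
end

section
/- For every k ≥ 2, the star arboricity of the hypercube Q_{2^k - 1} equals 2^{k-1} + 1. -/
namespace StarProof

variable {n : ℕ}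

/-- flip coordinate `j` -/
def flip (v : Fin n → Bool) (j : Fin n) : Fin n → Bool := Function.update v j (!v j)

@[simp] lemma flip_self (v : Fin n → Bool) (j : Fin n) : flip v j j = !(v j) :=
  Function.update_self _ _ _

lemma flip_ne_apply (v : Fin n → Bool) {l j : Fin n} (h : l ≠ j) : flip v j l = v l :=
  Function.update_of_ne h _ _

@[simp] lemma flip_flip (v : Fin n → Bool) (j : Fin n) : flip (flip v j) j = v := by
  funext l
  rcases eq_or_ne l j with rfl | h
  · simp
  · rw [flip_ne_apply _ h, flip_ne_apply _ h]

lemma flip_ne (v : Fin n → Bool) (j : Fin n) : flip v j ≠ v := by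
  intro h
  have := congrFun h j
  simp at this

lemma eq_flip_unique {u v : Fin n → Bool} {j j' : Fin n} (h : v = flip u j)
    (h' : v = flip u j') : j = j' := by
  by_contra hne
  have h1 : v j = !(u j) := by rw [h]; simp
  have h2 : v j = u j := by rw [h', flip_ne_apply _ hne]
  rw [h2] at h1
  exact (Bool.self_ne_not _) h1

lemma cube_adj_iff {u v : Fin n → Bool} :
    (cubeGraph n).Adj u v ↔ ∃ j, v = flip u j := by
  constructor
  · intro h
    obtain ⟨j, hj⟩ := Finset.card_eq_one.mp h
    refine ⟨j, funext fun l => ?_⟩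
    rcases eq_or_ne l j with rfl | hne
    · have : l ∈ Finset.univ.filter fun i => u i ≠ v i := by rw [hj]; simp
      have : u l ≠ v l := by simpa using this
      simp only [flip_self]
      cases hul : u l <;> cases hvl : v l <;> simp_all
    · have : l ∉ Finset.univ.filter fun i => u i ≠ v i := by rw [hj]; simpa using hne
      have : ¬ u l ≠ v l := by simpa using this
      rw [flip_ne_apply _ hne]
      exact (not_not.mp this).symm
  · rintro ⟨j, rfl⟩
    show (Finset.univ.filter fun i => u i ≠ flip u j i).card = 1
    have : (Finset.univ.filter fun i => u i ≠ flip u j i) = {j} := by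
      ext l
      simp only [Finset.mem_filter, Finset.mem_univ, true_and, Finset.mem_singleton]
      constructor
      · intro hl
        by_contra hne
        exact hl (flip_ne_apply u hne).symm
      · rintro rfl
        simp
    rw [this, Finset.card_singleton]

lemma cube_adj_flip (u : Fin n → Bool) (j : Fin n) : (cubeGraph n).Adj u (flip u j) :=
  cube_adj_iff.mpr ⟨j, rfl⟩

instance : Std.Commutative (fun a b : ℕ => a ^^^ b) := ⟨Nat.xor_comm⟩
instance : Std.Associative (fun a b : ℕ => a ^^^ b) := ⟨Nat.xor_assoc⟩

def hdir (j : ℕ) : ℕ := j / 2 + 1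

def sig (v : Fin n → Bool) : ℕ :=
  Finset.univ.fold (fun a b : ℕ => a ^^^ b) 0
    (fun j : Fin n => if v j = true ∧ j.val + 1 < n then hdir j.val else 0)

lemma xor_left_cancel {a b c : ℕ} (h : a ^^^ b = a ^^^ c) : b = c := by
  have := congrArg (fun x => a ^^^ x) h
  simpa [← Nat.xor_assoc, Nat.xor_self] using this

lemma fold_xor_lt {α : Type*} (s : Finset α) (f : α → ℕ) (m : ℕ)
    (h : ∀ a ∈ s, f a < 2 ^ m) :
    s.fold (fun a b : ℕ => a ^^^ b) 0 f < 2 ^ m := by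
  induction s using Finset.cons_induction with
  | empty => simpa using Nat.pos_pow_of_pos m (by norm_num)
  | cons a s ha ih =>
      rw [Finset.fold_cons]
      exact Nat.xor_lt_two_pow (h a (Finset.mem_cons_self a s))
        (ih fun x hx => h x (Finset.mem_cons_of_mem hx))

lemma sig_lt {k : ℕ} (hk : 2 ≤ k) (hn : n = 2 ^ k - 1) (v : Fin n → Bool) :
    sig v < 2 ^ (k - 1) := by
  refine fold_xor_lt _ _ _ fun j _ => ?_
  by_cases h : v j = true ∧ j.val + 1 < n
  · rw [if_pos h]
    have h2 : 2 ^ k = 2 * 2 ^ (k - 1) := by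
      conv_lhs => rw [show k = (k - 1) + 1 by omega]
      ring
    have h3 := h.2
    show j.val / 2 + 1 < 2 ^ (k - 1)
    omega
  · rw [if_neg h]
    exact Nat.two_pow_pos _

lemma sig_flip_aux (v : Fin n → Bool) (j : Fin n) :
    sig (flip v j) ^^^ (if flip v j j = true ∧ j.val + 1 < n then hdir j.val else 0)
      = sig v ^^^ (if v j = true ∧ j.val + 1 < n then hdir j.val else 0) := by
  unfold sig
  have huniv : (Finset.univ : Finset (Fin n)) = insert j (Finset.univ.erase j) :=
    (Finset.insert_erase (Finset.mem_univ j)).symm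
  rw [huniv, Finset.fold_insert (Finset.notMem_erase j _),
    Finset.fold_insert (Finset.notMem_erase j _)]
  have hc : Finset.fold (fun a b : ℕ => a ^^^ b) 0
      (fun i : Fin n => if flip v j i = true ∧ i.val + 1 < n then hdir i.val else 0)
      (Finset.univ.erase j)
      = Finset.fold (fun a b : ℕ => a ^^^ b) 0
      (fun i : Fin n => if v i = true ∧ i.val + 1 < n then hdir i.val else 0)
      (Finset.univ.erase j) := by
    apply Finset.fold_congr
    intro x hx
    rw [flip_ne_apply v (Finset.ne_of_mem_erase hx)]
  rw [hc]
  generalize (Finset.fold (fun a b : ℕ => a ^^^ b) 0 _ _ : ℕ) = R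
  generalize (if flip v j j = true ∧ j.val + 1 < n then hdir j.val else 0 : ℕ) = A
  generalize (if v j = true ∧ j.val + 1 < n then hdir j.val else 0 : ℕ) = B
  rw [Nat.xor_comm A R, Nat.xor_comm B R, Nat.xor_assoc, Nat.xor_assoc,
    Nat.xor_self, Nat.xor_self]

lemma sig_flip (v : Fin n → Bool) (j : Fin n) (hj : j.val + 1 < n) :
    sig (flip v j) = sig v ^^^ hdir j.val := by
  have h := sig_flip_aux v j
  by_cases hv : v j = true
  · have h1 : ¬ (flip v j j = true ∧ j.val + 1 < n) := by simp [hv]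
    rw [if_neg h1, if_pos ⟨hv, hj⟩, Nat.xor_zero] at h
    exact h
  · have hvf : v j = false := by simpa using hv
    have h1 : (flip v j j = true ∧ j.val + 1 < n) := ⟨by simp [hvf], hj⟩
    have h2 : ¬ (v j = true ∧ j.val + 1 < n) := by simp [hvf]
    rw [if_pos h1, if_neg h2, Nat.xor_zero] at h
    rw [← h, Nat.xor_assoc, Nat.xor_self, Nat.xor_zero]

lemma sig_flip_last (v : Fin n → Bool) (j : Fin n) (hj : j.val + 1 = n) :
    sig (flip v j) = sig v := by
  have h := sig_flip_aux v j
  have hnot : ¬ (j.val + 1 < n) := by omega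
  simp only [hnot, and_false, if_false, Nat.xor_zero] at h
  exact h

lemma sig_flip_ne (v : Fin n → Bool) (j : Fin n) (hj : j.val + 1 < n) :
    sig (flip v j) ≠ sig v := by
  rw [sig_flip v j hj]
  intro h
  have : sig v ^^^ hdir j.val = sig v ^^^ 0 := by rw [Nat.xor_zero]; exact h
  have := xor_left_cancel this
  unfold hdir at this
  omega


/-- coordinate read with default -/
def getb (v : Fin n → Bool) (m : ℕ) : Bool := if h : m < n then v ⟨m, h⟩ else false

/-- the "center indicator" of a vertex relative to direction pair `j/2` -/
def cent (v : Fin n → Bool) (j : ℕ) : Bool :=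
  xor (getb v (2 * (j / 2))) (getb v (2 * (j / 2) + 1))

lemma getb_flip_same (v : Fin n → Bool) (j : Fin n) :
    getb (flip v j) j.val = !(getb v j.val) := by
  unfold getb
  rw [dif_pos j.isLt, dif_pos j.isLt]
  have : (⟨j.val, j.isLt⟩ : Fin n) = j := rfl
  rw [this, flip_self]

lemma getb_flip_ne (v : Fin n → Bool) (j : Fin n) {m : ℕ} (h : m ≠ j.val) :
    getb (flip v j) m = getb v m := by
  unfold getb
  by_cases hm : m < n
  · rw [dif_pos hm, dif_pos hm]
    exact flip_ne_apply v (by simp [Fin.ext_iff, h])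
  · rw [dif_neg hm, dif_neg hm]

lemma cent_flip (v : Fin n → Bool) (j : Fin n) :
    cent (flip v j) j.val = !(cent v j.val) := by
  unfold cent
  rcases Nat.even_or_odd j.val with he | ho
  · have h0 : 2 * (j.val / 2) = j.val := by
      obtain ⟨m, hm⟩ := he; omega
    have h1 : 2 * (j.val / 2) + 1 ≠ j.val := by omega
    rw [getb_flip_ne v j h1, h0, getb_flip_same]
    cases getb v j.val <;> cases getb v (j.val + 1) <;> rfl
  · have h0 : 2 * (j.val / 2) + 1 = j.val := by
      obtain ⟨m, hm⟩ := ho; omega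
    have h1 : 2 * (j.val / 2) ≠ j.val := by omega
    rw [getb_flip_ne v j h1, h0, getb_flip_same]
    cases getb v j.val <;> cases getb v (2 * (j.val / 2)) <;> simp

lemma cent_pair (v : Fin n → Bool) {j j' : ℕ} (h : j / 2 = j' / 2) :
    cent v j = cent v j' := by unfold cent; rw [h]

/-- the galaxy of color `c` -/
def classGraph (n c : ℕ) : SimpleGraph (Fin n → Bool) where
  Adj u v := ∃ j : Fin n, j.val + 1 < n ∧ v = flip u j ∧
    ((cent u j.val = decide (j.val % 2 = 1) ∧ sig u = c) ∨
     (cent v j.val = decide (j.val % 2 = 1) ∧ sig v = c))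
  symm := by
    constructor
    rintro u v ⟨j, hj, rfl, h⟩
    exact ⟨j, hj, (flip_flip u j).symm, h.symm⟩
  loopless := by
    constructor
    rintro u ⟨j, hj, hflip, h⟩
    exact flip_ne u j hflip.symm

/-- the matching galaxy in the last direction -/
def matchGraph (n : ℕ) : SimpleGraph (Fin n → Bool) where
  Adj u v := ∃ hp : 0 < n, v = flip u ⟨n - 1, Nat.sub_lt hp one_pos⟩
  symm := by
    constructor
    rintro u v ⟨hp, rfl⟩
    exact ⟨hp, (flip_flip u _).symm⟩
  loopless := by
    constructor
    rintro u ⟨hp, hflip⟩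
    exact flip_ne u _ hflip.symm

/-- in a class-graph edge, exactly one endpoint has the color as its signature -/
lemma classGraph_sig {c : ℕ} {u v : Fin n → Bool} (h : (classGraph n c).Adj u v) :
    (sig u = c ∧ sig v ≠ c) ∨ (sig v = c ∧ sig u ≠ c) := by
  obtain ⟨j, hj, rfl, hor⟩ := h
  have hne : sig (flip u j) ≠ sig u := sig_flip_ne u j hj
  rcases hor with ⟨-, hsig⟩ | ⟨-, hsig⟩
  · exact Or.inl ⟨hsig, by rw [hsig] at hne; exact hne⟩
  · exact Or.inr ⟨hsig, by rw [hsig] at hne; exact fun hc => hne hc.symm⟩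

/-- leaf uniqueness : a vertex with signature ≠ c has at most one edge in class c -/
lemma classGraph_leaf_unique {c : ℕ} {w x y : Fin n → Bool} (hw : sig w ≠ c)
    (h1 : (classGraph n c).Adj w x) (h2 : (classGraph n c).Adj w y) : x = y := by
  obtain ⟨j1, hj1, rfl, hor1⟩ := h1
  obtain ⟨j2, hj2, rfl, hor2⟩ := h2
  rcases hor1 with ⟨-, hs⟩ | ⟨hc1, hs1⟩
  · exact absurd hs hw
  rcases hor2 with ⟨-, hs⟩ | ⟨hc2, hs2⟩
  · exact absurd hs hw
  rcases eq_or_ne j1 j2 with rfl | hne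
  · rfl
  exfalso
  rw [sig_flip w j1 hj1] at hs1
  rw [sig_flip w j2 hj2] at hs2
  have hdd : hdir j1.val = hdir j2.val := xor_left_cancel (hs1.trans hs2.symm)
  have hq : j1.val / 2 = j2.val / 2 := by unfold hdir at hdd; omega
  have hpar : j1.val % 2 ≠ j2.val % 2 := by
    intro h
    exact hne (Fin.ext (by omega))
  rw [cent_flip w j1] at hc1
  rw [cent_flip w j2] at hc2
  rw [cent_pair w hq] at hc1
  rw [hc1] at hc2
  have : (j1.val % 2 = 1) ↔ (j2.val % 2 = 1) := by
    simpa [decide_eq_decide] using hc2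
  omega

lemma classGraph_galaxy (c : ℕ) : IsGalaxy (classGraph n c) := by
  constructor
  · intro a b d hab hbd hda
    have h1 := classGraph_sig hab
    have h2 := classGraph_sig hbd
    have h3 := classGraph_sig hda
    tauto
  · intro a b x d hab hbx hxd
    by_contra hcon
    push_neg at hcon
    obtain ⟨hac, hbd⟩ := hcon
    rcases classGraph_sig hbx with ⟨hb, hx⟩ | ⟨hx, hb⟩
    · exact hbd (classGraph_leaf_unique hx ((classGraph n c).adj_symm hbx) hxd)
    · exact hac (classGraph_leaf_unique hb ((classGraph n c).adj_symm hab) hbx)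

lemma matchGraph_unique {u v w : Fin n → Bool} (h1 : (matchGraph n).Adj u v)
    (h2 : (matchGraph n).Adj u w) : v = w := by
  obtain ⟨hp, rfl⟩ := h1
  obtain ⟨hq, rfl⟩ := h2
  rfl

lemma matchGraph_galaxy : IsGalaxy (matchGraph n) := by
  constructor
  · intro a b x hab hbx hxa
    have hax : a = x := matchGraph_unique ((matchGraph n).adj_symm hab) hbx
    subst hax
    exact (matchGraph n).loopless.irrefl a hxa
  · intro a b x d hab hbx hxd
    exact Or.inl (matchGraph_unique ((matchGraph n).adj_symm hab) hbx)

/-- the family of galaxies decomposing the cube -/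
def Fam (k : ℕ) : Fin (2 ^ (k - 1) + 1) → SimpleGraph (Fin (2 ^ k - 1) → Bool) :=
  fun i => if i.val < 2 ^ (k - 1) then classGraph (2 ^ k - 1) i.val
    else matchGraph (2 ^ k - 1)

lemma fam_eq_class {k : ℕ} (i : Fin (2 ^ (k - 1) + 1)) (h : i.val < 2 ^ (k - 1)) :
    Fam k i = classGraph (2 ^ k - 1) i.val := if_pos h

lemma fam_eq_match {k : ℕ} (i : Fin (2 ^ (k - 1) + 1)) (h : ¬ i.val < 2 ^ (k - 1)) :
    Fam k i = matchGraph (2 ^ k - 1) := if_neg h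

lemma fam_le {k : ℕ} (i : Fin (2 ^ (k - 1) + 1)) : Fam k i ≤ cubeGraph (2 ^ k - 1) := by
  intro u v h
  by_cases hi : i.val < 2 ^ (k - 1)
  · rw [fam_eq_class i hi] at h
    obtain ⟨j, hj, rfl, -⟩ := h
    exact cube_adj_flip u j
  · rw [fam_eq_match i hi] at h
    obtain ⟨hp, rfl⟩ := h
    exact cube_adj_flip u _

lemma fam_galaxy {k : ℕ} (i : Fin (2 ^ (k - 1) + 1)) : IsGalaxy (Fam k i) := by
  by_cases hi : i.val < 2 ^ (k - 1)
  · rw [fam_eq_class i hi]; exact classGraph_galaxy _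
  · rw [fam_eq_match i hi]; exact matchGraph_galaxy

lemma fam_partition {k : ℕ} (hk : 2 ≤ k) :
    ∀ u v, (cubeGraph (2 ^ k - 1)).Adj u v → ∃! i, (Fam k i).Adj u v := by
  have h2k : 2 ^ k = 2 * 2 ^ (k - 1) := by
    conv_lhs => rw [show k = (k - 1) + 1 by omega]
    ring
  have hK1 : 1 < 2 ^ (k - 1) := by
    have : 2 ^ 1 ≤ 2 ^ (k - 1) := Nat.pow_le_pow_right (by norm_num) (by omega)
    omega
  set n := 2 ^ k - 1 with hn
  intro u v h
  obtain ⟨j, rfl⟩ := cube_adj_iff.mp h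
  by_cases hj : j.val + 1 < n
  · -- paired direction
    have hcent := cent_flip u j
    by_cases hcu : cent u j.val = decide (j.val % 2 = 1)
    · -- u is the center
      have hlt : sig u < 2 ^ (k - 1) := sig_lt hk hn u
      refine ⟨⟨sig u, by omega⟩, ?_, ?_⟩
      · show (Fam k _).Adj u (flip u j)
        rw [fam_eq_class _ hlt]
        exact ⟨j, hj, rfl, Or.inl ⟨hcu, rfl⟩⟩
      · rintro i hi
        by_cases hiK : i.val < 2 ^ (k - 1)
        · rw [fam_eq_class i hiK] at hi
          obtain ⟨j', hj', hflip, hor⟩ := hi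
          have hjj : j = j' := eq_flip_unique rfl hflip
          subst hjj
          rcases hor with ⟨-, hs⟩ | ⟨hc', -⟩
          · exact Fin.ext hs.symm
          · exfalso
            rw [hcent, hcu] at hc'
            simp at hc'
        · exfalso
          rw [fam_eq_match i hiK] at hi
          obtain ⟨hp, hflip⟩ := hi
          have hjj : j = ⟨n - 1, Nat.sub_lt hp one_pos⟩ := eq_flip_unique rfl hflip
          have := congrArg Fin.val hjj
          simp at this
          omega
    · -- v = flip u j is the center
      have hcv : cent (flip u j) j.val = decide (j.val % 2 = 1) := by
        rw [hcent]
        cases hdd : cent u j.val <;> cases hd2 : decide (j.val % 2 = 1) <;> simp_all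
      have hlt : sig (flip u j) < 2 ^ (k - 1) := sig_lt hk hn _
      refine ⟨⟨sig (flip u j), by omega⟩, ?_, ?_⟩
      · show (Fam k _).Adj u (flip u j)
        rw [fam_eq_class _ hlt]
        exact ⟨j, hj, rfl, Or.inr ⟨hcv, rfl⟩⟩
      · rintro i hi
        by_cases hiK : i.val < 2 ^ (k - 1)
        · rw [fam_eq_class i hiK] at hi
          obtain ⟨j', hj', hflip, hor⟩ := hi
          have hjj : j = j' := eq_flip_unique rfl hflip
          subst hjj
          rcases hor with ⟨hc', -⟩ | ⟨-, hs⟩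
          · exact absurd hc' hcu
          · exact Fin.ext hs.symm
        · exfalso
          rw [fam_eq_match i hiK] at hi
          obtain ⟨hp, hflip⟩ := hi
          have hjj : j = ⟨n - 1, Nat.sub_lt hp one_pos⟩ := eq_flip_unique rfl hflip
          have := congrArg Fin.val hjj
          simp at this
          omega
  · -- last direction
    have hjn : j.val = n - 1 := by have := j.isLt; omega
    have hnpos : 0 < n := by omega
    refine ⟨⟨2 ^ (k - 1), by omega⟩, ?_, ?_⟩
    · show (Fam k _).Adj u (flip u j)
      rw [fam_eq_match _ (by simp)]
      refine ⟨hnpos, ?_⟩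
      have hje : j = (⟨n - 1, Nat.sub_lt hnpos one_pos⟩ : Fin (2 ^ k - 1)) := Fin.ext hjn
      rw [← hje]
    · rintro i hi
      by_cases hiK : i.val < 2 ^ (k - 1)
      · exfalso
        rw [fam_eq_class i hiK] at hi
        obtain ⟨j', hj', hflip, -⟩ := hi
        have hjj : j = j' := eq_flip_unique rfl hflip
        omega
      · exact Fin.ext (by simp; omega)

section Lower

variable {V : Type*} [Fintype V] [DecidableEq V]

lemma galaxy_edge_deg (F : SimpleGraph V) [DecidableRel F.Adj] (hF : IsGalaxy F)
    {u v : V} (h : F.Adj u v) : F.degree u = 1 ∨ F.degree v = 1 := by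
  by_contra hcon
  push_neg at hcon
  obtain ⟨hu, hv⟩ := hcon
  have hu0 : 0 < F.degree u := (F.degree_pos_iff_exists_adj u).mpr ⟨v, h⟩
  have hv0 : 0 < F.degree v := (F.degree_pos_iff_exists_adj v).mpr ⟨u, F.adj_symm h⟩
  have hu2 : 1 < (F.neighborFinset u).card := by
    rw [F.card_neighborFinset_eq_degree]; omega
  have hv2 : 1 < (F.neighborFinset v).card := by
    rw [F.card_neighborFinset_eq_degree]; omega
  obtain ⟨a, ha, hav⟩ := Finset.exists_mem_ne hu2 v
  obtain ⟨d, hd, hdu⟩ := Finset.exists_mem_ne hv2 u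
  have h1 : F.Adj a u := F.adj_symm ((F.mem_neighborFinset u a).mp ha)
  have h2 : F.Adj v d := (F.mem_neighborFinset v d).mp hd
  rcases hF.2 a u v d h1 h h2 with rfl | rfl
  · exact hav rfl
  · exact hdu rfl

lemma galaxy_sum_deg (F : SimpleGraph V) [DecidableRel F.Adj] (hF : IsGalaxy F) :
    ∑ v, F.degree v ≤ 2 * (Finset.univ.filter fun v => F.degree v = 1).card := by
  classical
  set s : Finset (V × V) := Finset.univ.filter (fun p => F.Adj p.1 p.2) with hs
  have hsum : ∑ v, F.degree v = s.card := by
    rw [hs, Finset.card_filter, Fintype.sum_prod_type]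
    apply Finset.sum_congr rfl
    intro u _
    rw [← F.card_neighborFinset_eq_degree, SimpleGraph.neighborFinset_eq_filter,
      Finset.card_filter]
  set f : V × V → V := fun p => if F.degree p.1 = 1 then p.1 else p.2 with hf
  have hmemadj : ∀ p : V × V, p ∈ s → F.Adj p.1 p.2 := by
    intro p hp
    simpa [hs] using hp
  have himgdeg : ∀ w ∈ s.image f, F.degree w = 1 := by
    intro w hw
    simp only [Finset.mem_image] at hw
    obtain ⟨p, hp, hfp⟩ := hw
    have hadj := hmemadj p hp
    by_cases hd : F.degree p.1 = 1
    · rw [hf] at hfp; simp only [if_pos hd] at hfp; rw [← hfp]; exact hd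
    · rw [hf] at hfp; simp only [if_neg hd] at hfp; rw [← hfp]
      rcases galaxy_edge_deg F hF hadj with h1 | h2
      · exact absurd h1 hd
      · exact h2
  have hfib : ∀ w ∈ s.image f, (s.filter fun p => f p = w).card ≤ 2 := by
    intro w hw
    have hw1 : (F.neighborFinset w).card = 1 := by
      rw [F.card_neighborFinset_eq_degree]; exact himgdeg w hw
    obtain ⟨x, hx⟩ := Finset.card_eq_one.mp hw1
    have hsub : (s.filter fun p => f p = w) ⊆ {(w, x), (x, w)} := by
      intro p hp
      simp only [Finset.mem_filter] at hp
      obtain ⟨hpmem, hfp⟩ := hp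
      have hadj := hmemadj p hpmem
      simp only [Finset.mem_insert, Finset.mem_singleton]
      by_cases hd : F.degree p.1 = 1
      · rw [hf] at hfp; simp only [if_pos hd] at hfp
        have hx2 : p.2 ∈ F.neighborFinset w := by
          rw [(F.mem_neighborFinset w p.2), ← hfp]; exact hadj
        rw [hx, Finset.mem_singleton] at hx2
        left
        exact Prod.ext hfp hx2
      · rw [hf] at hfp; simp only [if_neg hd] at hfp
        have hx1 : p.1 ∈ F.neighborFinset w := by
          rw [(F.mem_neighborFinset w p.1), ← hfp]; exact F.adj_symm hadj
        rw [hx, Finset.mem_singleton] at hx1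
        right
        exact Prod.ext hx1 hfp
    calc (s.filter fun p => f p = w).card ≤ ({(w, x), (x, w)} : Finset (V × V)).card :=
          Finset.card_le_card hsub
      _ ≤ 2 := by
          apply (Finset.card_insert_le _ _).trans
          simp
  have hmain := Finset.card_le_mul_card_image s 2 hfib
  have himg : s.image f ⊆ Finset.univ.filter fun v => F.degree v = 1 := by
    intro w hw
    simp only [Finset.mem_filter, Finset.mem_univ, true_and]
    exact himgdeg w hw
  calc ∑ v, F.degree v = s.card := hsum
    _ ≤ 2 * (s.image f).card := hmain
    _ ≤ 2 * (Finset.univ.filter fun v => F.degree v = 1).card :=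
        Nat.mul_le_mul_left 2 (Finset.card_le_card himg)

end Lower

lemma lower_bound {k n : ℕ} (hk : 2 ≤ k) (hn : n = 2 ^ k - 1) {s : ℕ}
    (F : Fin s → SimpleGraph (Fin n → Bool))
    (hle : ∀ i, F i ≤ cubeGraph n) (hgal : ∀ i, IsGalaxy (F i))
    (hpart : ∀ u v, (cubeGraph n).Adj u v → ∃! i, (F i).Adj u v) :
    2 ^ (k - 1) + 1 ≤ s := by
  classical
  have h2k : 2 ^ k = 2 * 2 ^ (k - 1) := by
    conv_lhs => rw [show k = (k - 1) + 1 by omega]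
    ring
  have hK1 : 2 ≤ 2 ^ (k - 1) := by
    have : 2 ^ 1 ≤ 2 ^ (k - 1) := Nat.pow_le_pow_right (by norm_num) (by omega)
    omega
  by_contra hcon
  push_neg at hcon
  have hsK : s ≤ 2 ^ (k - 1) := by omega
  -- degree of the cube is n
  have hdegcube : ∀ v : Fin n → Bool, (cubeGraph n).degree v = n := by
    intro v
    rw [← SimpleGraph.card_neighborFinset_eq_degree]
    have himg : (cubeGraph n).neighborFinset v = Finset.image (flip v) Finset.univ := by
      ext w
      rw [SimpleGraph.mem_neighborFinset]
      simp only [Finset.mem_image, Finset.mem_univ, true_and]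
      rw [cube_adj_iff]
      constructor
      · rintro ⟨j, rfl⟩; exact ⟨j, rfl⟩
      · rintro ⟨j, rfl⟩; exact ⟨j, rfl⟩
    rw [himg, Finset.card_image_of_injective _ (fun j j' h => eq_flip_unique rfl h)]
    simp
  -- degrees decompose
  have hdecomp : ∀ v : Fin n → Bool, (n : ℕ) = ∑ i, (F i).degree v := by
    intro v
    conv_lhs => rw [← hdegcube v]
    rw [← SimpleGraph.card_neighborFinset_eq_degree]
    have hU : (cubeGraph n).neighborFinset v
        = Finset.univ.biUnion (fun i => (F i).neighborFinset v) := by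
      ext w
      simp only [Finset.mem_biUnion, Finset.mem_univ, true_and,
        SimpleGraph.mem_neighborFinset]
      constructor
      · intro h
        obtain ⟨i, hi, -⟩ := hpart v w h
        exact ⟨i, hi⟩
      · rintro ⟨i, hi⟩
        exact hle i hi
    rw [hU, Finset.card_biUnion]
    · apply Finset.sum_congr rfl
      intro i _
      rw [SimpleGraph.card_neighborFinset_eq_degree]
    · intro i _ j _ hij
      simp only [Function.onFun]
      rw [Finset.disjoint_left]
      intro w hwi hwj
      rw [SimpleGraph.mem_neighborFinset] at hwi hwj
      obtain ⟨i0, hi0, huniq⟩ := hpart v w (hle i hwi)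
      exact hij ((huniq i hwi).trans (huniq j hwj).symm)
  -- per-vertex leaf-count bound
  have hvK : ∀ v : Fin n → Bool,
      (Finset.univ.filter fun i => (F i).degree v = 1).card ≤ s - 1 := by
    intro v
    have hle1 : (Finset.univ.filter fun i => (F i).degree v = 1).card ≤ s := by
      apply (Finset.card_filter_le _ _).trans
      simp
    have hne : (Finset.univ.filter fun i => (F i).degree v = 1).card ≠ s := by
      intro hcard
      have huniv : (Finset.univ.filter fun i => (F i).degree v = 1) = Finset.univ :=
        Finset.eq_univ_of_card _ (by simpa using hcard)
      have hall : ∀ i, (F i).degree v = 1 := by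
        intro i
        have : i ∈ Finset.univ.filter fun i => (F i).degree v = 1 := by
          rw [huniv]; exact Finset.mem_univ i
        simpa using this
      have : (n : ℕ) = s := by
        rw [hdecomp v]
        simp [hall]
      omega
    omega
  -- global count
  have hcardV : Fintype.card (Fin n → Bool) = 2 ^ n := by simp
  have hchain : n * 2 ^ n ≤ 2 * ((s - 1) * 2 ^ n) := by
    calc n * 2 ^ n = ∑ _v : Fin n → Bool, n := by
          rw [Finset.sum_const, Finset.card_univ, hcardV]; ring
      _ = ∑ v : Fin n → Bool, ∑ i, (F i).degree v := by
          apply Finset.sum_congr rfl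
          intro v _
          exact hdecomp v
      _ = ∑ i, ∑ v : Fin n → Bool, (F i).degree v := Finset.sum_comm
      _ ≤ ∑ i, 2 * (Finset.univ.filter fun v => (F i).degree v = 1).card := by
          apply Finset.sum_le_sum
          intro i _
          exact galaxy_sum_deg (F i) (hgal i)
      _ = 2 * ∑ i, (Finset.univ.filter fun v => (F i).degree v = 1).card := by
          rw [Finset.mul_sum]
      _ = 2 * ∑ v : Fin n → Bool,
            (Finset.univ.filter fun i => (F i).degree v = 1).card := by
          congr 1
          simp only [Finset.card_filter]
          exact Finset.sum_comm
      _ ≤ 2 * ∑ _v : Fin n → Bool, (s - 1) := by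
          apply Nat.mul_le_mul_left
          apply Finset.sum_le_sum
          intro v _
          exact hvK v
      _ = 2 * ((s - 1) * 2 ^ n) := by
          rw [Finset.sum_const, Finset.card_univ, hcardV]; ring
  have hfin : n ≤ 2 * (s - 1) := by
    apply Nat.le_of_mul_le_mul_right _ (Nat.two_pow_pos n)
    calc n * 2 ^ n ≤ 2 * ((s - 1) * 2 ^ n) := hchain
      _ = (2 * (s - 1)) * 2 ^ n := by ring
  omega

end StarProof

/-- $sa(Q_{2^k-1}) = 2^{k-1}+1$ for $k \ge 2$. -/
theorem starArboricity_cube_pow_sub_one (k : ℕ) (hk : 2 ≤ k) :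
    starArboricity (cubeGraph (2 ^ k - 1)) = 2 ^ (k - 1) + 1 := by
  have hmem : 2 ^ (k - 1) + 1 ∈ {m | ∃ F : Fin m → SimpleGraph (Fin (2 ^ k - 1) → Bool),
      (∀ i, F i ≤ cubeGraph (2 ^ k - 1)) ∧ (∀ i, IsGalaxy (F i)) ∧
      (∀ u v, (cubeGraph (2 ^ k - 1)).Adj u v → ∃! i, (F i).Adj u v)} :=
    ⟨StarProof.Fam k, StarProof.fam_le, StarProof.fam_galaxy, StarProof.fam_partition hk⟩
  apply le_antisymm
  · exact Nat.sInf_le hmem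
  · apply le_csInf ⟨_, hmem⟩
    rintro b ⟨F, hle, hgal, hpart⟩
    exact StarProof.lower_bound hk rfl F hle hgal hpart
end

section
/- For every t ≥ 2, sa(Q_{2^t - 1}) ≤ 2^{t-1} + 1, derived from the fact that the chromatic number of the square of Q_{2^t - 1} equals 2^t. -/
/-- The square of a graph: two distinct vertices are adjacent iff their
distance in `G` is at most 2. -/
def square {V : Type*} (G : SimpleGraph V) : SimpleGraph V where
  Adj u v := u ≠ v ∧ (G.Adj u v ∨ ∃ w, G.Adj u w ∧ G.Adj w v)
  symm := by
    constructor
    rintro u v ⟨h1, h2⟩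
    refine ⟨h1.symm, ?_⟩
    rcases h2 with h | ⟨w, hw1, hw2⟩
    · exact Or.inl h.symm
    · exact Or.inr ⟨w, hw2.symm, hw1.symm⟩
  loopless := by constructor; rintro u ⟨h, -⟩; exact h rfl

/-- class assignment on colors: pairs `{2i, 2i+1}`, same-pair edges go to
class `m`, inter-pair edges to the pair of the "center" endpoint. -/
def cls (m a b : ℕ) : ℕ :=
  if a / 2 = b / 2 then m
  else if (a % 2 = b % 2 ∧ a / 2 < b / 2) ∨ (a % 2 ≠ b % 2 ∧ b / 2 < a / 2) then a / 2
  else b / 2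

lemma cls_symm (m a b : ℕ) : cls m a b = cls m b a := by
  unfold cls; split_ifs <;> omega

lemma cls_le (m a b : ℕ) (ha : a < 2*m) (hb : b < 2*m) : cls m a b ≤ m := by
  unfold cls; split_ifs <;> omega

lemma cls_eq_m (m a b : ℕ) (ha : a < 2*m) (hb : b < 2*m) (h : cls m a b = m) :
    a / 2 = b / 2 := by
  unfold cls at h; split_ifs at h <;> omega

lemma cls_lt (m a b i : ℕ) (h : cls m a b = i) (hi : i < m) :
    (a / 2 = i ∧ b / 2 ≠ i) ∨ (b / 2 = i ∧ a / 2 ≠ i) := by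
  unfold cls at h; split_ifs at h <;> omega

lemma cls_leaf (m a x y i : ℕ) (hx : cls m a x = i) (hy : cls m a y = i)
    (ha : a / 2 ≠ i) (hx2 : x / 2 = i) (hy2 : y / 2 = i) (hxy : x ≠ y) : False := by
  unfold cls at hx hy; split_ifs at hx hy <;> omega

/-- The galaxy with index `i` extracted from a coloring. -/
def Fgal {V : Type*} (G : SimpleGraph V) (C : V → ℕ) (m i : ℕ) : SimpleGraph V where
  Adj u v := G.Adj u v ∧ cls m (C u) (C v) = i
  symm := by
    constructor
    rintro u v ⟨h1, h2⟩
    exact ⟨h1.symm, by rwa [cls_symm] at h2⟩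
  loopless := by constructor; rintro u ⟨h, -⟩; exact G.loopless.irrefl u h

lemma sa_le_of_coloring {V : Type*} (G : SimpleGraph V) (m : ℕ) (C : V → ℕ)
    (hbd : ∀ v, C v < 2 * m)
    (h1 : ∀ u v, G.Adj u v → C u ≠ C v)
    (h2 : ∀ v x y, G.Adj v x → G.Adj v y → x ≠ y → C x ≠ C y) :
    starArboricity G ≤ m + 1 := by
  apply Nat.sInf_le
  refine ⟨fun i => Fgal G C m i.val, fun i u v h => h.1, ?_, ?_⟩
  · -- each class is a galaxy
    intro i
    rcases Nat.lt_or_ge i.val m with hi | hi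
    · -- inter-pair classes
      -- edge property
      have hedge : ∀ u v, (Fgal G C m i.val).Adj u v →
          ((C u)/2 = i.val ∧ (C v)/2 ≠ i.val) ∨ ((C v)/2 = i.val ∧ (C u)/2 ≠ i.val) :=
        fun u v h => cls_lt m (C u) (C v) i.val h.2 hi
      -- leaf degree
      have hleaf : ∀ v x y, (Fgal G C m i.val).Adj v x → (Fgal G C m i.val).Adj v y →
          x ≠ y → (C v)/2 ≠ i.val → False := by
        intro v x y hx hy hxy hv
        have hx2 : (C x)/2 = i.val := by
          rcases hedge v x hx with ⟨h, _⟩ | ⟨h, _⟩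
          · exact absurd h hv
          · exact h
        have hy2 : (C y)/2 = i.val := by
          rcases hedge v y hy with ⟨h, _⟩ | ⟨h, _⟩
          · exact absurd h hv
          · exact h
        exact cls_leaf m (C v) (C x) (C y) i.val hx.2 hy.2 hv hx2 hy2
          (h2 v x y hx.1 hy.1 hxy)
      constructor
      · intro a b c hab hbc hca
        rcases hedge a b hab with ⟨ha, hb⟩ | ⟨hb, ha⟩ <;>
          rcases hedge b c hbc with ⟨hb', hc⟩ | ⟨hc, hb'⟩ <;>
          rcases hedge c a hca with ⟨hc', ha'⟩ | ⟨ha', hc'⟩ <;> omega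
      · intro a b c d hab hbc hcd
        rcases hedge a b hab with ⟨ha, hb⟩ | ⟨hb, ha⟩
        · -- a center, b leaf
          have hc : (C c)/2 = i.val := by
            rcases hedge b c hbc with ⟨h, _⟩ | ⟨h, _⟩ <;> omega
          by_cases hac : a = c
          · exact Or.inl hac
          · exact absurd (hleaf b a c hab.symm hbc hac hb) (fun h => h)
        · -- b center
          have hcnot : (C c)/2 ≠ i.val := by
            rcases hedge b c hbc with ⟨h', h⟩ | ⟨h, h'⟩ <;> omega
          have hd : (C d)/2 = i.val := by
            rcases hedge c d hcd with ⟨h, h'⟩ | ⟨h, h'⟩ <;> omega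
          by_cases hbd' : b = d
          · exact Or.inr hbd'
          · exact absurd (hleaf c b d hbc.symm hcd hbd' hcnot) (fun h => h)
    · -- matching class: i.val = m
      have him : i.val = m := le_antisymm (Nat.lt_succ_iff.mp i.isLt) hi
      have hdeg : ∀ v x y, (Fgal G C m i.val).Adj v x → (Fgal G C m i.val).Adj v y →
          x ≠ y → False := by
        intro v x y hx hy hxy
        have ex : (C v)/2 = (C x)/2 :=
          cls_eq_m m (C v) (C x) (hbd v) (hbd x) (hx.2.trans him)
        have ey : (C v)/2 = (C y)/2 :=
          cls_eq_m m (C v) (C y) (hbd v) (hbd y) (hy.2.trans him)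
        have nx := h1 v x hx.1
        have ny := h1 v y hy.1
        have nxy := h2 v x y hx.1 hy.1 hxy
        omega
      constructor
      · intro a b c hab hbc hca
        have hac : a ≠ c := (G.ne_of_adj hca.1).symm
        exact hdeg b a c hab.symm hbc hac
      · intro a b c d hab hbc hcd
        by_cases hac : a = c
        · exact Or.inl hac
        · exact absurd (hdeg b a c hab.symm hbc hac) (fun h => h)
  · -- unique class
    intro u v h
    have hle : cls m (C u) (C v) ≤ m := cls_le m (C u) (C v) (hbd u) (hbd v)
    refine ⟨⟨cls m (C u) (C v), Nat.lt_succ_of_le hle⟩, ⟨h, rfl⟩, ?_⟩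
    rintro j ⟨-, hj⟩
    exact Fin.ext hj.symm

/-- $sa(Q_{2^t-1}) \le 2^{t-1}+1$ for $t \ge 2$, as derived from
$\chi((Q_{2^t-1})^2) = 2^t$. -/
theorem starArboricity_cube_le_of_square_chromatic (t : ℕ) (ht : 2 ≤ t)
    (hchi : (square (cubeGraph (2 ^ t - 1))).chromaticNumber = (2 ^ t : ℕ)) :
    starArboricity (cubeGraph (2 ^ t - 1)) ≤ 2 ^ (t - 1) + 1 := by
  set G := cubeGraph (2 ^ t - 1) with hG
  obtain ⟨C0⟩ : (square G).Colorable (2 ^ t) :=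
    (SimpleGraph.chromaticNumber_le_iff_colorable).mp (le_of_eq hchi)
  have hpow : 2 ^ t = 2 * 2 ^ (t - 1) := by
    conv_lhs => rw [show t = (t - 1) + 1 by omega]
    rw [pow_succ]
    ring
  apply sa_le_of_coloring G (2 ^ (t - 1)) (fun v => (C0 v).val)
  · intro v
    rw [← hpow]
    exact (C0 v).isLt
  · intro u v h
    have : C0 u ≠ C0 v := C0.valid ⟨G.ne_of_adj h, Or.inl h⟩
    exact fun he => this (Fin.ext he)
  · intro v x y hx hy hxy
    have : C0 x ≠ C0 y := C0.valid ⟨hxy, Or.inr ⟨v, hx.symm, hy⟩⟩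
    exact fun he => this (Fin.ext he)
end
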